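/- arXiv:2201.02059 — 2 statements merged into one kernel-verified Lean document; each statement's English description precedes it below -/
import Mathlib

section
/- Let F ⊆ ℝ^d be a non-empty compact set, let Φ = {φ_i}_{i∈Λ} be a similarity IFS which satisfies the strong separation condition, and let T ∈ 𝒯'_Λ be a tree with no leaves such that F = Γ_Φ(T). Then for every microset M of F there exist a set A ∈ cl(S_Φ^T) and an expanding similarity map ψ with Q° ∩ ψ(A) ⊆ M ⊆ Q ∩ ψ(A), where Q° denotes the interior of Q. -/
open Metric Filter Set
open scoped ENNReal NNReal

noncomputable section

abbrev Euc (d : ℕ) : Type := EuclideanSpace ℝ (Fin d)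

/-- `f : ℝ^d → ℝ^d` is a similarity with scaling ratio `r`. -/
def IsSimilarityWithRatio {d : ℕ} (f : Euc d → Euc d) (r : ℝ) : Prop :=
  ∀ x y : Euc d, dist (f x) (f y) = r * dist x y

/-- `f` is a similarity map (with some positive scaling ratio). -/
def IsSimilarity {d : ℕ} (f : Euc d → Euc d) : Prop :=
  ∃ r : ℝ, 0 < r ∧ IsSimilarityWithRatio f r

/-- `f` is an expanding similarity map (scaling ratio `≥ 1`). -/
def IsExpandingSimilarity {d : ℕ} (f : Euc d → Euc d) : Prop :=
  ∃ r : ℝ, 1 ≤ r ∧ IsSimilarityWithRatio f r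

/-- `f` is a contracting similarity map with ratio `r ∈ (0,1)`. -/
def IsContractingSimilarity {d : ℕ} (f : Euc d → Euc d) (r : ℝ) : Prop :=
  0 < r ∧ r < 1 ∧ IsSimilarityWithRatio f r

/-- The closed unit cube `Q = [0,1]^d`. -/
def unitCube (d : ℕ) : Set (Euc d) := {x | ∀ i, x i ∈ Set.Icc (0:ℝ) 1}

/-- A miniset of `F`: a non-empty set of the form `Q ∩ ψ(F)` with `ψ` an expanding similarity. -/
def IsMiniset {d : ℕ} (F M : Set (Euc d)) : Prop :=
  M.Nonempty ∧ ∃ ψ : Euc d → Euc d, IsExpandingSimilarity ψ ∧ M = unitCube d ∩ ψ '' F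

/-- A microset of `F`: a limit of minisets of `F` in the Hausdorff metric. -/
def IsMicroset {d : ℕ} (F M : Set (Euc d)) : Prop :=
  IsCompact M ∧ M.Nonempty ∧ ∃ A : ℕ → Set (Euc d), (∀ n, IsMiniset F (A n)) ∧
    Tendsto (fun n => hausdorffDist (A n) M) atTop (nhds 0)

/-- A tree with alphabet `Λ`: a prefix-closed set of finite words containing the empty word. -/
def IsTree {Λ : Type} (T : Set (List Λ)) : Prop :=
  ([] : List Λ) ∈ T ∧ ∀ w ∈ T, ∀ v : List Λ, v <+: w → v ∈ T

/-- Every word of `T` has a one-letter extension in `T`. -/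
def HasNoLeaves {Λ : Type} (T : Set (List Λ)) : Prop :=
  ∀ w ∈ T, ∃ a : Λ, w ++ [a] ∈ T

/-- The boundary `∂T` of a tree: infinite words all of whose finite prefixes lie in `T`. -/
def treeBoundary {Λ : Type} (T : Set (List Λ)) : Set (ℕ → Λ) :=
  {x | ∀ n : ℕ, (List.ofFn fun i : Fin n => x i) ∈ T}

/-- The descendant tree `T^v = {w : vw ∈ T}`. -/
def descTree {Λ : Type} (T : Set (List Λ)) (v : List Λ) : Set (List Λ) :=
  {w | v ++ w ∈ T}

/-- The composition `φ_w = φ_{w₁} ∘ ⋯ ∘ φ_{w_k}` for a finite word `w`. -/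
def wordMap {X : Type} {Λ : Type} (Φ : Λ → X → X) (w : List Λ) : X → X :=
  fun z => w.foldr (fun a y => Φ a y) z

/-- The coding map `γ_Φ(i) = lim_n φ_{i₁} ∘ ⋯ ∘ φ_{iₙ}(0)`. -/
def codeMap {d : ℕ} {Λ : Type} (Φ : Λ → Euc d → Euc d) (x : ℕ → Λ) : Euc d :=
  limUnder atTop (fun n => wordMap Φ (List.ofFn fun i : Fin n => x i) 0)

/-- `Γ_Φ(T) = γ_Φ(∂T)`. -/
def treeProj {d : ℕ} {Λ : Type} (Φ : Λ → Euc d → Euc d) (T : Set (List Λ)) : Set (Euc d) :=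
  codeMap Φ '' treeBoundary T

/-- The collection `S_Φ^T = {Γ_Φ(T^v) : v ∈ T}`. -/
def branchSets {d : ℕ} {Λ : Type} (Φ : Λ → Euc d → Euc d) (T : Set (List Λ)) :
    Set (Set (Euc d)) :=
  {A | ∃ v ∈ T, A = treeProj Φ (descTree T v)}

/-- `A` belongs to the closure of `S_Φ^T` in the Hausdorff metric: `A` is a non-empty compact
set which is a Hausdorff-metric limit of a sequence of sets `Γ_Φ(T^{vₙ})`, `vₙ ∈ T`. -/
def inClosureBranchSets {d : ℕ} {Λ : Type} (Φ : Λ → Euc d → Euc d) (T : Set (List Λ))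
    (A : Set (Euc d)) : Prop :=
  IsCompact A ∧ A.Nonempty ∧ ∃ v : ℕ → List Λ, (∀ n, v n ∈ T) ∧
    Tendsto (fun n => hausdorffDist (treeProj Φ (descTree T (v n))) A) atTop (nhds 0)

/-- The scaling ratio `r_w = r_{w₁} ⋯ r_{w_k}` of a word. -/
def wordRatio {Λ : Type} (r : Λ → ℝ) (w : List Λ) : ℝ := (w.map r).prod

/-- The section `Π_ρ = {w : r_w ≤ ρ < r_{w₁⋯w_{|w|-1}}}`. -/
def sectionPi {Λ : Type} (r : Λ → ℝ) (ρ : ℝ) : Set (List Λ) :=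
  {w | wordRatio r w ≤ ρ ∧ ρ < wordRatio r w.dropLast}

/-- `r_min = min_{i ∈ Λ} r_i`. -/
def rMin {Λ : Type} [Fintype Λ] [Nonempty Λ] (r : Λ → ℝ) : ℝ :=
  Finset.univ.inf' Finset.univ_nonempty r

/-- The weak separation condition: there is `c ∈ ℕ` such that for every `ρ ∈ (0, r_min)`,
every closed ball of radius `ρ` intersects at most `c` distinct sets among
`{φ_w(K) : w ∈ Π_ρ}` (identical sets counted once). -/
def SatisfiesWSC {d : ℕ} {Λ : Type} [Fintype Λ] [Nonempty Λ] (Φ : Λ → Euc d → Euc d)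
    (r : Λ → ℝ) (K : Set (Euc d)) : Prop :=
  ∃ c : ℕ, ∀ ρ : ℝ, 0 < ρ → ρ < rMin r → ∀ x : Euc d,
    ∃ V : Finset (Set (Euc d)), V.card ≤ c ∧
      ∀ w ∈ sectionPi r ρ, (wordMap Φ w '' K ∩ closedBall x ρ).Nonempty →
        wordMap Φ w '' K ∈ V

/-- The strong separation condition. -/
def SatisfiesSSC {d : ℕ} {Λ : Type} (Φ : Λ → Euc d → Euc d) (K : Set (Euc d)) : Prop :=
  ∀ i j : Λ, i ≠ j → (Φ i '' K) ∩ (Φ j '' K) = ∅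

/-- `U` is an OSC set for `Φ`. -/
def IsOSCSet {d : ℕ} {Λ : Type} (Φ : Λ → Euc d → Euc d) (U : Set (Euc d)) : Prop :=
  U.Nonempty ∧ IsOpen U ∧ (∀ i, Φ i '' U ⊆ U) ∧
    ∀ i j : Λ, i ≠ j → (Φ i '' U) ∩ (Φ j '' U) = ∅

/-- The open set condition. -/
def SatisfiesOSC {d : ℕ} {Λ : Type} (Φ : Λ → Euc d → Euc d) : Prop :=
  ∃ U : Set (Euc d), IsOSCSet Φ U

/-- `K` is the attractor of the IFS `Φ`. -/
def IsAttractor {d : ℕ} {Λ : Type} (Φ : Λ → Euc d → Euc d) (K : Set (Euc d)) : Prop :=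
  IsCompact K ∧ K.Nonempty ∧ K = ⋃ i : Λ, Φ i '' K


namespace Micro

variable {d : ℕ} {Λ : Type}

/-! ### similarity basics -/

theorem simil_continuous {f : Euc d → Euc d} {t : ℝ} (h : IsSimilarityWithRatio f t)
    (ht : 0 ≤ t) : Continuous f := by
  refine (LipschitzWith.of_dist_le_mul (K := t.toNNReal) fun x y => ?_).continuous
  rw [h x y, Real.coe_toNNReal _ ht]

theorem simil_comp {f g : Euc d → Euc d} {s t : ℝ} (hf : IsSimilarityWithRatio f s)
    (hg : IsSimilarityWithRatio g t) : IsSimilarityWithRatio (fun z => f (g z)) (s * t) := by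
  intro x y
  rw [hf, hg, mul_assoc]

/-! ### wordMap / wordRatio -/

@[simp] theorem wordMap_nil (Φ : Λ → Euc d → Euc d) (z : Euc d) : wordMap Φ [] z = z := rfl

@[simp] theorem wordMap_cons (Φ : Λ → Euc d → Euc d) (a : Λ) (w : List Λ) (z : Euc d) :
    wordMap Φ (a :: w) z = Φ a (wordMap Φ w z) := rfl

theorem wordMap_append (Φ : Λ → Euc d → Euc d) (w u : List Λ) (z : Euc d) :
    wordMap Φ (w ++ u) z = wordMap Φ w (wordMap Φ u z) := by
  simp [wordMap, List.foldr_append]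

@[simp] theorem wordRatio_nil (r : Λ → ℝ) : wordRatio r [] = 1 := rfl

@[simp] theorem wordRatio_cons (r : Λ → ℝ) (a : Λ) (w : List Λ) :
    wordRatio r (a :: w) = r a * wordRatio r w := by simp [wordRatio]

theorem wordRatio_append (r : Λ → ℝ) (w u : List Λ) :
    wordRatio r (w ++ u) = wordRatio r w * wordRatio r u := by simp [wordRatio]

theorem wordRatio_pos {r : Λ → ℝ} (hr : ∀ i, 0 < r i) (w : List Λ) : 0 < wordRatio r w := by
  induction w with
  | nil => simp
  | cons a w ih => simpa using mul_pos (hr a) ih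

theorem wordRatio_le_one {r : Λ → ℝ} (hr : ∀ i, 0 < r i) (hr1 : ∀ i, r i ≤ 1) (w : List Λ) :
    wordRatio r w ≤ 1 := by
  induction w with
  | nil => simp
  | cons a w ih =>
    have := mul_le_mul (hr1 a) ih (le_of_lt (wordRatio_pos hr w)) zero_le_one
    simpa using this

theorem wordRatio_le_pow {r : Λ → ℝ} {c : ℝ} (hc : 0 ≤ c) (hr : ∀ i, 0 < r i)
    (hrc : ∀ i, r i ≤ c) (w : List Λ) : wordRatio r w ≤ c ^ w.length := by
  induction w with
  | nil => simp
  | cons a w ih =>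
    have h1 : 0 < wordRatio r w := wordRatio_pos hr w
    calc wordRatio r (a :: w) = r a * wordRatio r w := by simp
    _ ≤ c * c ^ w.length := mul_le_mul (hrc a) ih h1.le hc
    _ = c ^ (a :: w).length := by rw [List.length_cons, pow_succ']

theorem wordRatio_prefix_mono {r : Λ → ℝ} (hr : ∀ i, 0 < r i) (hr1 : ∀ i, r i ≤ 1)
    {w u : List Λ} (h : w <+: u) : wordRatio r u ≤ wordRatio r w := by
  obtain ⟨t, rfl⟩ := h
  rw [wordRatio_append]
  calc wordRatio r w * wordRatio r t ≤ wordRatio r w * 1 :=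
        mul_le_mul_of_nonneg_left (wordRatio_le_one hr hr1 t) (wordRatio_pos hr w).le
  _ = wordRatio r w := mul_one _

theorem wordMap_similarity {Φ : Λ → Euc d → Euc d} {r : Λ → ℝ}
    (hΦ : ∀ i, IsContractingSimilarity (Φ i) (r i)) (w : List Λ) :
    IsSimilarityWithRatio (wordMap Φ w) (wordRatio r w) := by
  induction w with
  | nil => intro x y; simp
  | cons a w ih =>
    intro x y
    simp only [wordMap_cons, wordRatio_cons]
    rw [(hΦ a).2.2, ih, mul_assoc]

/-! ### prefixes -/

def pref (x : ℕ → Λ) (n : ℕ) : List Λ := List.ofFn fun i : Fin n => x i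

@[simp] theorem pref_zero (x : ℕ → Λ) : pref x 0 = [] := rfl

theorem pref_succ (x : ℕ → Λ) (n : ℕ) : pref x (n + 1) = pref x n ++ [x n] := by
  rw [pref, List.ofFn_succ']
  simp [pref, List.concat_eq_append]

@[simp] theorem pref_length (x : ℕ → Λ) (n : ℕ) : (pref x n).length = n := by
  simp [pref]

theorem dropLast_pref (x : ℕ → Λ) (n : ℕ) : (pref x (n + 1)).dropLast = pref x n := by
  rw [pref_succ]; exact List.dropLast_concat

theorem pref_add (x : ℕ → Λ) (n m : ℕ) :
    pref x (n + m) = pref x n ++ pref (fun k => x (n + k)) m := by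
  induction m with
  | zero => simp
  | succ m ih =>
    rw [← Nat.add_assoc, pref_succ, ih, pref_succ, List.append_assoc]



end Micro
namespace Micro
variable {d : ℕ} {Λ : Type}
/-! ### part 2 : fintype constants and the coding map -/

variable [Fintype Λ] [Nonempty Λ]

def rmax (r : Λ → ℝ) : ℝ := Finset.univ.sup' Finset.univ_nonempty r

theorem le_rmax (r : Λ → ℝ) (i : Λ) : r i ≤ rmax r :=
  Finset.le_sup' r (Finset.mem_univ i)

theorem rMin_le (r : Λ → ℝ) (i : Λ) : rMin r ≤ r i :=
  Finset.inf'_le r (Finset.mem_univ i)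

theorem rmax_pos {r : Λ → ℝ} (hr : ∀ i, 0 < r i) : 0 < rmax r :=
  lt_of_lt_of_le (hr (Classical.arbitrary Λ)) (le_rmax r _)

theorem rmax_lt_one {r : Λ → ℝ} (hr : ∀ i, r i < 1) : rmax r < 1 := by
  rw [rmax, Finset.sup'_lt_iff]
  exact fun i _ => hr i

theorem rMin_pos {r : Λ → ℝ} (hr : ∀ i, 0 < r i) : 0 < rMin r := by
  rw [rMin, Finset.lt_inf'_iff]
  exact fun i _ => hr i

theorem rMin_lt_one {r : Λ → ℝ} (hr : ∀ i, r i < 1) : rMin r < 1 :=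
  lt_of_le_of_lt (rMin_le r (Classical.arbitrary Λ)) (hr _)

/-- uniform bound for images of the origin -/
def cB (Φ : Λ → Euc d → Euc d) (r : Λ → ℝ) : ℝ :=
  (Finset.univ.sup' Finset.univ_nonempty fun i => dist (Φ i 0) 0) / (1 - rmax r)

theorem cB_nonneg {Φ : Λ → Euc d → Euc d} {r : Λ → ℝ} (hr : ∀ i, r i < 1) :
    0 ≤ cB Φ r := by
  apply div_nonneg
  · exact le_trans dist_nonneg
      (Finset.le_sup' (f := fun i => dist (Φ i 0) 0) (Finset.mem_univ (Classical.arbitrary Λ)))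
  · linarith [rmax_lt_one hr]

theorem dist_wordMap_zero {Φ : Λ → Euc d → Euc d} {r : Λ → ℝ}
    (hΦ : ∀ i, IsContractingSimilarity (Φ i) (r i)) (w : List Λ) :
    dist (wordMap Φ w 0) 0 ≤ cB Φ r := by
  have hml : rmax r < 1 := rmax_lt_one fun i => (hΦ i).2.1
  have h1 : (0:ℝ) < 1 - rmax r := by linarith
  induction w with
  | nil =>
    have : dist (wordMap Φ ([] : List Λ) 0) 0 = 0 := by simp [wordMap]
    rw [this]; exact cB_nonneg (Φ := Φ) fun i => (hΦ i).2.1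
  | cons a w ih =>
    have key : dist (Φ a (wordMap Φ w 0)) 0 ≤
        dist (Φ a (wordMap Φ w 0)) (Φ a 0) + dist (Φ a 0) 0 := dist_triangle _ _ _
    have h2 : dist (Φ a (wordMap Φ w 0)) (Φ a 0) = r a * dist (wordMap Φ w 0) 0 :=
      (hΦ a).2.2 _ _
    have h3 : r a * dist (wordMap Φ w 0) 0 ≤ rmax r * cB Φ r :=
      mul_le_mul (le_rmax r a) ih dist_nonneg (rmax_pos fun i => (hΦ i).1).le
    have h4 : dist (Φ a 0) 0 ≤ Finset.univ.sup' Finset.univ_nonempty fun i => dist (Φ i 0) 0 :=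
      Finset.le_sup' (f := fun i => dist (Φ i 0) 0) (Finset.mem_univ a)
    have h5 : rmax r * cB Φ r + (Finset.univ.sup' Finset.univ_nonempty
        fun i => dist (Φ i 0) 0) = cB Φ r := by
      rw [cB]; field_simp; ring
    show dist (Φ a (wordMap Φ w 0)) 0 ≤ cB Φ r
    calc dist (Φ a (wordMap Φ w 0)) 0 ≤ _ + _ := key
    _ ≤ rmax r * cB Φ r + _ := by rw [h2]; exact add_le_add h3 h4
    _ = cB Φ r := h5

theorem cauchy_partial {Φ : Λ → Euc d → Euc d} {r : Λ → ℝ}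
    (hΦ : ∀ i, IsContractingSimilarity (Φ i) (r i)) (x : ℕ → Λ) :
    CauchySeq (fun n => wordMap Φ (pref x n) 0) := by
  apply cauchySeq_of_le_geometric (r := rmax r) (C := cB Φ r)
  · exact rmax_lt_one fun i => (hΦ i).2.1
  · intro n
    have : pref x (n + 1) = pref x n ++ pref (fun k => x (n + k)) 1 := pref_add x n 1
    rw [this, wordMap_append]
    rw [(wordMap_similarity hΦ (pref x n)) _ _]
    have h1 : wordRatio r (pref x n) ≤ rmax r ^ n := by
      have := wordRatio_le_pow (rmax_pos fun i => (hΦ i).1).le (fun i => (hΦ i).1)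
        (le_rmax r) (pref x n)
      simpa using this
    have h2 : dist (wordMap Φ (pref (fun k => x (n + k)) 1) 0) 0 ≤ cB Φ r :=
      dist_wordMap_zero hΦ _
    calc wordRatio r (pref x n) * dist 0 (wordMap Φ (pref (fun k => x (n + k)) 1) 0)
        ≤ rmax r ^ n * cB Φ r := by
          rw [dist_comm]
          exact mul_le_mul h1 h2 dist_nonneg (pow_nonneg (rmax_pos fun i => (hΦ i).1).le n)
    _ = cB Φ r * rmax r ^ n := mul_comm _ _

theorem tendsto_code {Φ : Λ → Euc d → Euc d} {r : Λ → ℝ}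
    (hΦ : ∀ i, IsContractingSimilarity (Φ i) (r i)) (x : ℕ → Λ) :
    Tendsto (fun n => wordMap Φ (pref x n) 0) atTop (nhds (codeMap Φ x)) :=
  (cauchy_partial hΦ x).tendsto_limUnder

theorem dist_code_zero {Φ : Λ → Euc d → Euc d} {r : Λ → ℝ}
    (hΦ : ∀ i, IsContractingSimilarity (Φ i) (r i)) (x : ℕ → Λ) :
    dist (codeMap Φ x) 0 ≤ cB Φ r := by
  apply le_of_tendsto ((tendsto_code hΦ x).dist tendsto_const_nhds)
  exact Eventually.of_forall fun n => dist_wordMap_zero hΦ _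

theorem codeMap_shift {Φ : Λ → Euc d → Euc d} {r : Λ → ℝ}
    (hΦ : ∀ i, IsContractingSimilarity (Φ i) (r i)) (x : ℕ → Λ) (n : ℕ) :
    codeMap Φ x = wordMap Φ (pref x n) (codeMap Φ (fun k => x (n + k))) := by
  have hcont : Continuous (wordMap Φ (pref x n)) :=
    simil_continuous (wordMap_similarity hΦ _) (wordRatio_pos (fun i => (hΦ i).1) _).le
  have h1 : Tendsto (fun m => wordMap Φ (pref x (n + m)) 0) atTop
      (nhds (wordMap Φ (pref x n) (codeMap Φ (fun k => x (n + k))))) := by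
    have := (hcont.tendsto _).comp (tendsto_code hΦ (fun k => x (n + k)))
    apply Tendsto.congr _ this
    intro m
    simp only [Function.comp]
    rw [pref_add, wordMap_append]
  have h2 : Tendsto (fun m => wordMap Φ (pref x (n + m)) 0) atTop (nhds (codeMap Φ x)) := by
    have hnm : Tendsto (fun m : ℕ => n + m) atTop atTop := by
      apply tendsto_atTop_mono (fun m => Nat.le_add_left m n) tendsto_id
    exact (tendsto_code hΦ x).comp hnm
  exact tendsto_nhds_unique h2 h1

theorem wordMap_mem_K {Φ : Λ → Euc d → Euc d} {K : Set (Euc d)}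
    (hK : IsAttractor Φ K) (w : List Λ) {z : Euc d} (hz : z ∈ K) : wordMap Φ w z ∈ K := by
  induction w with
  | nil => exact hz
  | cons a w ih =>
    show Φ a (wordMap Φ w z) ∈ K
    have : Φ a (wordMap Φ w z) ∈ ⋃ i : Λ, Φ i '' K :=
      mem_iUnion.2 ⟨a, mem_image_of_mem _ ih⟩
    rwa [← hK.2.2] at this

theorem codeMap_mem_K {Φ : Λ → Euc d → Euc d} {r : Λ → ℝ} {K : Set (Euc d)}
    (hΦ : ∀ i, IsContractingSimilarity (Φ i) (r i)) (hK : IsAttractor Φ K) (x : ℕ → Λ) :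
    codeMap Φ x ∈ K := by
  obtain ⟨k₀, hk₀⟩ := hK.2.1
  have hKcl : IsClosed K := hK.1.isClosed
  rw [IsClosed.mem_iff_infDist_zero hKcl hK.2.1]
  have h0 : 0 ≤ infDist (codeMap Φ x) K := infDist_nonneg
  have hb : ∀ n : ℕ, infDist (codeMap Φ x) K ≤ rmax r ^ n * (cB Φ r + dist 0 k₀) := by
    intro n
    have hmem : wordMap Φ (pref x n) k₀ ∈ K := wordMap_mem_K hK _ hk₀
    have := infDist_le_dist_of_mem (x := codeMap Φ x) hmem
    apply le_trans this
    rw [codeMap_shift hΦ x n, (wordMap_similarity hΦ (pref x n)) _ _]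
    have h1 : wordRatio r (pref x n) ≤ rmax r ^ n := by
      simpa using wordRatio_le_pow (rmax_pos fun i => (hΦ i).1).le (fun i => (hΦ i).1)
        (le_rmax r) (pref x n)
    have h2 : dist (codeMap Φ (fun k => x (n + k))) k₀ ≤ cB Φ r + dist 0 k₀ := by
      calc dist (codeMap Φ (fun k => x (n + k))) k₀
          ≤ dist (codeMap Φ (fun k => x (n + k))) 0 + dist 0 k₀ := dist_triangle _ _ _
      _ ≤ cB Φ r + dist 0 k₀ := add_le_add_left (dist_code_zero hΦ _) _
    exact mul_le_mul h1 h2 dist_nonneg (pow_nonneg (rmax_pos fun i => (hΦ i).1).le n)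
  have hlim : Tendsto (fun n : ℕ => rmax r ^ n * (cB Φ r + dist 0 k₀)) atTop (nhds 0) := by
    rw [show (0:ℝ) = 0 * (cB Φ r + dist 0 k₀) by ring]
    exact (tendsto_pow_atTop_nhds_zero_of_lt_one (rmax_pos fun i => (hΦ i).1).le
      (rmax_lt_one fun i => (hΦ i).2.1)).mul_const _
  have : infDist (codeMap Φ x) K ≤ 0 := ge_of_tendsto hlim (Eventually.of_forall hb)
  linarith



end Micro

namespace Micro
section Part3
variable {d : ℕ} {Λ : Type}

/-! ### trees -/

theorem mem_descTree {T : Set (List Λ)} {v w : List Λ} :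
    w ∈ descTree T v ↔ v ++ w ∈ T := Iff.rfl

@[simp] theorem descTree_nil (T : Set (List Λ)) : descTree T [] = T := by
  ext w; simp [descTree]

theorem boundary_nonempty {T : Set (List Λ)} (hTnl : HasNoLeaves T) [Nonempty Λ]
    {v : List Λ} (hv : v ∈ T) : (treeBoundary (descTree T v)).Nonempty := by
  classical
  let pick : List Λ → Λ := fun w =>
    if h : v ++ w ∈ T then Classical.choose (hTnl _ h) else Classical.arbitrary Λ
  let u : ℕ → List Λ := fun n => Nat.rec [] (fun _ w => w ++ [pick w]) n
  have hu0 : u 0 = [] := rfl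
  have husucc : ∀ n, u (n + 1) = u n ++ [pick (u n)] := fun n => rfl
  have humem : ∀ n, v ++ u n ∈ T := by
    intro n
    induction n with
    | zero => rw [hu0, List.append_nil]; exact hv
    | succ n ih =>
      rw [husucc n]
      have hp : pick (u n) = Classical.choose (hTnl _ ih) := dif_pos ih
      have := Classical.choose_spec (hTnl _ ih)
      rw [hp, ← List.append_assoc]
      exact this
  refine ⟨fun n => pick (u n), ?_⟩
  intro n
  have hup : u n = pref (fun m => pick (u m)) n := by
    induction n with
    | zero => rfl
    | succ n ih => rw [husucc n, pref_succ, ← ih]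
  show pref (fun m => pick (u m)) n ∈ descTree T v
  rw [mem_descTree, ← hup]
  exact humem n

/-! ### sections -/

theorem exists_section_prefix [Fintype Λ] [Nonempty Λ] {r : Λ → ℝ}
    (hr : ∀ i, 0 < r i) (hr1 : ∀ i, r i < 1) {ρ : ℝ} (hρ : 0 < ρ) (hρ1 : ρ < 1) (x : ℕ → Λ) :
    ∃ n : ℕ, pref x n ∈ sectionPi r ρ := by
  classical
  have hex : ∃ n : ℕ, wordRatio r (pref x n) ≤ ρ := by
    have hto : Tendsto (fun n : ℕ => rmax r ^ n) atTop (nhds 0) :=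
      tendsto_pow_atTop_nhds_zero_of_lt_one (rmax_pos hr).le (rmax_lt_one hr1)
    obtain ⟨N, hN⟩ := (hto.eventually (gt_mem_nhds hρ)).exists
    refine ⟨N, le_of_lt (lt_of_le_of_lt ?_ hN)⟩
    simpa using wordRatio_le_pow (rmax_pos hr).le hr (le_rmax r) (pref x N)
  let n := Nat.find hex
  have hn : wordRatio r (pref x n) ≤ ρ := Nat.find_spec hex
  have hn0 : n ≠ 0 := by
    intro h0
    have := hn
    rw [h0] at this
    simp [wordRatio] at this
    linarith
  obtain ⟨m, hm⟩ : ∃ m, n = m + 1 := ⟨n - 1, by omega⟩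
  refine ⟨n, hn, ?_⟩
  rw [hm, dropLast_pref]
  by_contra hcon
  push_neg at hcon
  have := Nat.find_min hex (show m < n by omega)
  exact this hcon

theorem section_ne_nil {r : Λ → ℝ} {ρ : ℝ} (hρ1 : ρ < 1) {w : List Λ}
    (hw : w ∈ sectionPi r ρ) : w ≠ [] := by
  intro h
  rcases hw with ⟨h1, _⟩
  rw [h] at h1
  simp [wordRatio] at h1
  linarith

theorem section_ratio_gt [Fintype Λ] [Nonempty Λ] {r : Λ → ℝ}
    (hr : ∀ i, 0 < r i) {ρ : ℝ} (hρ1 : ρ < 1) {w : List Λ}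
    (hw : w ∈ sectionPi r ρ) : ρ * rMin r < wordRatio r w := by
  rcases hw with ⟨h1, h2⟩
  have hne : w ≠ [] := by
    intro h; rw [h] at h1; simp [wordRatio] at h1; linarith
  have hdec : w.dropLast ++ [w.getLast hne] = w := List.dropLast_append_getLast hne
  calc ρ * rMin r < wordRatio r w.dropLast * rMin r :=
        mul_lt_mul_of_pos_right h2 (rMin_pos hr)
  _ ≤ wordRatio r w.dropLast * r (w.getLast hne) :=
        mul_le_mul_of_nonneg_left (rMin_le r _) (wordRatio_pos hr _).le
  _ = wordRatio r w := by
        conv_rhs => rw [← hdec]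
        rw [wordRatio_append]
        simp [wordRatio]

theorem section_incomparable {r : Λ → ℝ} (hr : ∀ i, 0 < r i) (hr1 : ∀ i, r i < 1)
    {ρ : ℝ} {w u : List Λ} (hw : w ∈ sectionPi r ρ) (hu : u ∈ sectionPi r ρ)
    (hne : w ≠ u) : ¬ w <+: u := by
  intro hpre
  have hlen : w.length ≤ u.length := hpre.length_le
  have hlt : w.length < u.length := by
    rcases lt_or_eq_of_le hlen with h | h
    · exact h
    · exact absurd (hpre.eq_of_length h) hne
  have hpd : w <+: u.dropLast := by
    rw [List.prefix_iff_eq_take] at hpre ⊢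
    rw [List.dropLast_eq_take, List.take_take]
    rw [min_eq_left (by omega)]
    exact hpre
  have := wordRatio_prefix_mono hr (fun i => (hr1 i).le) hpd
  have h1 := hw.1
  have h2 := hu.2
  linarith

/-! ### fork lemma -/

theorem exists_fork : ∀ (w u : List Λ), ¬ w <+: u → ¬ u <+: w →
    ∃ (p : List Λ) (a b : Λ) (w' u' : List Λ),
      a ≠ b ∧ w = p ++ a :: w' ∧ u = p ++ b :: u' := by
  intro w
  induction w with
  | nil => intro u hwu _; exact absurd (List.nil_prefix) hwu
  | cons c w₁ ih =>
    intro u hwu huw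
    match u with
    | [] => exact absurd (List.nil_prefix) huw
    | c' :: u₁ =>
      by_cases hcc : c = c'
      · subst hcc
        have h1 : ¬ w₁ <+: u₁ := fun h => hwu (List.cons_prefix_cons.2 ⟨rfl, h⟩)
        have h2 : ¬ u₁ <+: w₁ := fun h => huw (List.cons_prefix_cons.2 ⟨rfl, h⟩)
        obtain ⟨p, a, b, w', u', hab, hw, hu⟩ := ih u₁ h1 h2
        exact ⟨c :: p, a, b, w', u', hab, by rw [hw]; rfl, by rw [hu]; rfl⟩
      · exact ⟨[], c, c', w₁, u₁, hcc, rfl, rfl⟩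

end Part3
end Micro

namespace Micro
section Part4
variable {d : ℕ} {Λ : Type}

theorem mem_treeBoundary {T : Set (List Λ)} {x : ℕ → Λ} :
    x ∈ treeBoundary T ↔ ∀ n, pref x n ∈ T := Iff.rfl

/-! ### separation -/

theorem exists_delta [Fintype Λ] {Φ : Λ → Euc d → Euc d} {r : Λ → ℝ} {K : Set (Euc d)}
    (hΦ : ∀ i, IsContractingSimilarity (Φ i) (r i))
    (hK : IsAttractor Φ K) (hSSC : SatisfiesSSC Φ K) :
    ∃ δ : ℝ, 0 < δ ∧ δ ≤ 1 ∧ ∀ i j : Λ, i ≠ j →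
      ∀ x ∈ Φ i '' K, ∀ y ∈ Φ j '' K, δ ≤ dist x y := by
  classical
  have sep : ∀ i j : Λ, i ≠ j → ∃ δ : ℝ, 0 < δ ∧
      ∀ x ∈ Φ i '' K, ∀ y ∈ Φ j '' K, δ ≤ dist x y := by
    intro i j hij
    have hci : IsCompact (Φ i '' K) := hK.1.image (simil_continuous (hΦ i).2.2 (hΦ i).1.le)
    have hcj : IsCompact (Φ j '' K) := hK.1.image (simil_continuous (hΦ j).2.2 (hΦ j).1.le)
    have hdisj : Disjoint (Φ i '' K) (Φ j '' K) :=
      Set.disjoint_iff_inter_eq_empty.2 (hSSC i j hij)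
    obtain ⟨δ, hδ, hth⟩ := hdisj.exists_thickenings hci hcj.isClosed
    refine ⟨δ, hδ, fun x hx y hy => ?_⟩
    by_contra hlt
    push_neg at hlt
    have h1 : y ∈ Metric.thickening δ (Φ i '' K) :=
      Metric.mem_thickening_iff.2 ⟨x, hx, by rwa [dist_comm]⟩
    have h2 : y ∈ Metric.thickening δ (Φ j '' K) :=
      Metric.mem_thickening_iff.2 ⟨y, hy, by simpa using hδ⟩
    exact (Set.disjoint_left.1 hth) h1 h2
  by_cases hpair : ∃ p : Λ × Λ, p.1 ≠ p.2
  · let P : Finset (Λ × Λ) := Finset.univ.filter fun p => p.1 ≠ p.2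
    have hPne : P.Nonempty := by
      obtain ⟨p, hp⟩ := hpair; exact ⟨p, by simp [P, hp]⟩
    let g : Λ × Λ → ℝ := fun p =>
      if h : p.1 ≠ p.2 then Classical.choose (sep p.1 p.2 h) else 1
    refine ⟨min 1 (P.inf' hPne g), ?_, min_le_left _ _, ?_⟩
    · apply lt_min one_pos
      rw [Finset.lt_inf'_iff]
      intro p hp
      have hp' : p.1 ≠ p.2 := by simpa [P] using hp
      simp only [g, dif_pos hp']
      exact (Classical.choose_spec (sep p.1 p.2 hp')).1
    · intro i j hij x hx y hy
      have hmem : (i, j) ∈ P := by simp [P, hij]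
      have h1 : min 1 (P.inf' hPne g) ≤ g (i, j) :=
        le_trans (min_le_right _ _) (Finset.inf'_le g hmem)
      have h2 : g (i, j) ≤ dist x y := by
        simp only [g, dif_pos (show (i, j).1 ≠ (i, j).2 from hij)]
        exact (Classical.choose_spec (sep i j hij)).2 x hx y hy
      exact le_trans h1 h2
  · push_neg at hpair
    exact ⟨1, one_pos, le_refl 1, fun i j hij => absurd (hpair (i, j)) hij⟩

theorem word_sep [Fintype Λ] [Nonempty Λ] {Φ : Λ → Euc d → Euc d} {r : Λ → ℝ} {K : Set (Euc d)}
    (hΦ : ∀ i, IsContractingSimilarity (Φ i) (r i)) (hK : IsAttractor Φ K) {δ : ℝ}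
    (hδ0 : 0 < δ)
    (hδ : ∀ i j : Λ, i ≠ j → ∀ x ∈ Φ i '' K, ∀ y ∈ Φ j '' K, δ ≤ dist x y)
    {w u : List Λ} (hwu : ¬ w <+: u) (huw : ¬ u <+: w)
    {x y : Euc d} (hx : x ∈ wordMap Φ w '' K) (hy : y ∈ wordMap Φ u '' K) :
    δ * wordRatio r w ≤ dist x y := by
  have hr : ∀ i, 0 < r i := fun i => (hΦ i).1
  obtain ⟨p, a, b, w', u', hab, hwp, hup⟩ := exists_fork w u hwu huw
  obtain ⟨kx, hkx, rfl⟩ := hx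
  obtain ⟨ky, hky, rfl⟩ := hy
  subst hwp; subst hup
  rw [wordMap_append, wordMap_append]
  have hx1 : wordMap Φ (a :: w') kx ∈ Φ a '' K :=
    ⟨wordMap Φ w' kx, wordMap_mem_K hK w' hkx, rfl⟩
  have hy1 : wordMap Φ (b :: u') ky ∈ Φ b '' K :=
    ⟨wordMap Φ u' ky, wordMap_mem_K hK u' hky, rfl⟩
  have hd := hδ a b hab _ hx1 _ hy1
  rw [(wordMap_similarity hΦ p) _ _]
  have h1 : wordRatio r (p ++ a :: w') ≤ wordRatio r p :=
    wordRatio_prefix_mono hr (fun i => ((hΦ i).2.1).le) ⟨a :: w', rfl⟩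
  calc δ * wordRatio r (p ++ a :: w') ≤ δ * wordRatio r p :=
        mul_le_mul_of_nonneg_left h1 hδ0.le
  _ = wordRatio r p * δ := mul_comm _ _
  _ ≤ wordRatio r p * dist (wordMap Φ (a :: w') kx) (wordMap Φ (b :: u') ky) :=
        mul_le_mul_of_nonneg_left hd (wordRatio_pos hr p).le

/-! ### concatenation -/

def conc (w : List Λ) (j : ℕ → Λ) : ℕ → Λ := fun k =>
  if h : k < w.length then w.get ⟨k, h⟩ else j (k - w.length)

theorem pref_conc (w : List Λ) (j : ℕ → Λ) (n : ℕ) :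
    pref (conc w j) n = w.take n ++ pref j (n - w.length) := by
  induction n with
  | zero => simp
  | succ n ih =>
    rw [pref_succ, ih]
    by_cases h : n < w.length
    · have h1 : conc w j n = w.get ⟨n, h⟩ := dif_pos h
      have h2 : n + 1 - w.length = 0 := by omega
      have h3 : n - w.length = 0 := by omega
      rw [h1, h2, h3]
      simp only [pref_zero, List.append_nil]
      rw [← List.take_concat_get h, List.concat_eq_append, List.get_eq_getElem]
    · have h1 : conc w j n = j (n - w.length) := dif_neg h
      have h2 : w.take n = w := List.take_of_length_le (by omega)
      have h3 : w.take (n + 1) = w := List.take_of_length_le (by omega)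
      have h4 : n + 1 - w.length = (n - w.length) + 1 := by omega
      rw [h1, h2, h3, h4, pref_succ, List.append_assoc]

theorem pref_conc_len (w : List Λ) (j : ℕ → Λ) : pref (conc w j) w.length = w := by
  rw [pref_conc]
  simp

theorem shift_conc (w : List Λ) (j : ℕ → Λ) :
    (fun k => conc w j (w.length + k)) = j := by
  funext k
  have h : ¬ (w.length + k < w.length) := by omega
  show conc w j (w.length + k) = j k
  rw [conc, dif_neg h, Nat.add_sub_cancel_left]

theorem code_conc [Fintype Λ] [Nonempty Λ] {Φ : Λ → Euc d → Euc d} {r : Λ → ℝ}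
    (hΦ : ∀ i, IsContractingSimilarity (Φ i) (r i)) (w : List Λ) (j : ℕ → Λ) :
    codeMap Φ (conc w j) = wordMap Φ w (codeMap Φ j) := by
  have := codeMap_shift hΦ (conc w j) w.length
  rw [pref_conc_len, shift_conc] at this
  exact this

theorem conc_mem_boundary {T : Set (List Λ)} (hT : IsTree T) {w : List Λ} {j : ℕ → Λ}
    (hj : j ∈ treeBoundary (descTree T w)) : conc w j ∈ treeBoundary T := by
  have hw : w ∈ T := by
    have h0 := mem_treeBoundary.1 hj 0
    rw [pref_zero, mem_descTree, List.append_nil] at h0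
    exact h0
  rw [mem_treeBoundary]
  intro n
  rw [pref_conc]
  by_cases h : n ≤ w.length
  · have h0 : n - w.length = 0 := by omega
    rw [h0, pref_zero, List.append_nil]
    exact hT.2 w hw _ (List.take_prefix n w)
  · have h2 : w.take n = w := List.take_of_length_le (by omega)
    rw [h2]
    exact mem_treeBoundary.1 hj (n - w.length)

/-! ### pieces of the tree projection -/

theorem treeProj_subset_K [Fintype Λ] [Nonempty Λ] {Φ : Λ → Euc d → Euc d} {r : Λ → ℝ}
    {K : Set (Euc d)} (hΦ : ∀ i, IsContractingSimilarity (Φ i) (r i))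
    (hK : IsAttractor Φ K) (T' : Set (List Λ)) : treeProj Φ T' ⊆ K := by
  rintro y ⟨x, -, rfl⟩
  exact codeMap_mem_K hΦ hK x

theorem piece_subset [Fintype Λ] [Nonempty Λ] {Φ : Λ → Euc d → Euc d} {r : Λ → ℝ}
    (hΦ : ∀ i, IsContractingSimilarity (Φ i) (r i)) {T : Set (List Λ)} (hT : IsTree T)
    (w : List Λ) : wordMap Φ w '' treeProj Φ (descTree T w) ⊆ treeProj Φ T := by
  rintro y ⟨z, ⟨jj, hjj, rfl⟩, rfl⟩
  exact ⟨conc w jj, conc_mem_boundary hT hjj, code_conc hΦ w jj⟩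

theorem exists_piece [Fintype Λ] [Nonempty Λ] {Φ : Λ → Euc d → Euc d} {r : Λ → ℝ}
    (hΦ : ∀ i, IsContractingSimilarity (Φ i) (r i)) {T : Set (List Λ)}
    {ρ : ℝ} (hρ : 0 < ρ) (hρ1 : ρ < 1) {x : ℕ → Λ} (hx : x ∈ treeBoundary T) :
    ∃ w : List Λ, w ∈ sectionPi r ρ ∧ w ∈ T ∧
      ∃ j ∈ treeBoundary (descTree T w), codeMap Φ x = wordMap Φ w (codeMap Φ j) := by
  obtain ⟨n, hn⟩ := exists_section_prefix (fun i => (hΦ i).1) (fun i => (hΦ i).2.1) hρ hρ1 x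
  refine ⟨pref x n, hn, mem_treeBoundary.1 hx n, fun k => x (n + k), ?_, codeMap_shift hΦ x n⟩
  rw [mem_treeBoundary]
  intro m
  rw [mem_descTree, ← pref_add]
  exact mem_treeBoundary.1 hx (n + m)

/-! ### cube geometry -/

theorem zero_mem_unitCube : (0 : Euc d) ∈ unitCube d := by
  intro i
  constructor <;> simp

theorem unitCube_isClosed : IsClosed (unitCube d) := by
  have : unitCube d = ⋂ i : Fin d, (fun x : Euc d => x i) ⁻¹' Set.Icc (0:ℝ) 1 := by
    ext x; simp [unitCube]
  rw [this]
  exact isClosed_iInter fun i => IsClosed.preimage (PiLp.continuous_apply 2 _ i) isClosed_Icc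

theorem dist_le_of_mem_unitCube {x y : Euc d} (hx : x ∈ unitCube d) (hy : y ∈ unitCube d) :
    dist x y ≤ Real.sqrt d := by
  rw [EuclideanSpace.dist_eq]
  apply Real.sqrt_le_sqrt
  have hb : ∀ i : Fin d, dist (x i) (y i) ^ 2 ≤ 1 := by
    intro i
    have h1 : dist (x i) (y i) ≤ 1 := by
      rw [Real.dist_eq]
      have := hx i; have := hy i
      rw [abs_le]
      constructor <;> [linarith [(hx i).1, (hy i).2]; linarith [(hx i).2, (hy i).1]]
    calc dist (x i) (y i) ^ 2 ≤ 1 ^ 2 := by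
          apply pow_le_pow_left₀ dist_nonneg h1
    _ = 1 := one_pow 2
  calc ∑ i : Fin d, dist (x i) (y i) ^ 2 ≤ ∑ _i : Fin d, (1:ℝ) :=
        Finset.sum_le_sum fun i _ => hb i
  _ = d := by simp

theorem norm_le_of_mem_unitCube {x : Euc d} (hx : x ∈ unitCube d) : ‖x‖ ≤ Real.sqrt d := by
  have := dist_le_of_mem_unitCube hx (zero_mem_unitCube (d := d))
  rwa [dist_zero_right] at this

theorem unitCube_isBounded : Bornology.IsBounded (unitCube d) := by
  rw [isBounded_iff_forall_norm_le]
  exact ⟨Real.sqrt d, fun x hx => norm_le_of_mem_unitCube hx⟩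

theorem coord_le_norm (x : Euc d) (i : Fin d) : |x i| ≤ ‖x‖ := by
  rw [EuclideanSpace.norm_eq]
  rw [show |x i| = Real.sqrt (|x i| ^ 2) by rw [Real.sqrt_sq_eq_abs]; exact (abs_abs _).symm]
  apply Real.sqrt_le_sqrt
  have : |x i| ^ 2 = ‖x i‖ ^ 2 := by rw [Real.norm_eq_abs]
  rw [this]
  exact Finset.single_le_sum (fun j _ => sq_nonneg ‖x j‖) (Finset.mem_univ i)

end Part4
end Micro

namespace Micro
section Part5
variable {d : ℕ}

theorem simil_norm_sub {χ : Euc d → Euc d} {t : ℝ} (h : IsSimilarityWithRatio χ t)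
    (x y : Euc d) : ‖χ x - χ y‖ = t * ‖x - y‖ := by
  have := h x y
  rwa [dist_eq_norm, dist_eq_norm] at this

theorem simil_inner {χ : Euc d → Euc d} {t : ℝ} (h : IsSimilarityWithRatio χ t)
    (x y : Euc d) :
    (inner ℝ (χ x - χ 0) (χ y - χ 0) : ℝ) = t ^ 2 * inner ℝ x y := by
  have hL : ∀ z z' : Euc d, ‖(χ z - χ 0) - (χ z' - χ 0)‖ = t * ‖z - z'‖ := by
    intro z z'
    rw [show (χ z - χ 0) - (χ z' - χ 0) = χ z - χ z' by abel]
    exact simil_norm_sub h z z'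
  have hL0 : ∀ z : Euc d, ‖χ z - χ 0‖ = t * ‖z‖ := by
    intro z
    have := simil_norm_sub h z 0
    simpa using this
  have e1 : ‖(χ x - χ 0) - (χ y - χ 0)‖ ^ 2 =
      t ^ 2 * ‖x‖ ^ 2 - 2 * (t ^ 2 * inner ℝ x y) + t ^ 2 * ‖y‖ ^ 2 := by
    rw [hL x y, mul_pow, norm_sub_sq_real x y]
    ring
  have e2 : ‖(χ x - χ 0) - (χ y - χ 0)‖ ^ 2 =
      t ^ 2 * ‖x‖ ^ 2 - 2 * inner ℝ (χ x - χ 0) (χ y - χ 0) + t ^ 2 * ‖y‖ ^ 2 := by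
    rw [norm_sub_sq_real (χ x - χ 0) (χ y - χ 0), hL0 x, hL0 y]
    ring
  linarith [e1, e2]

theorem simil_decomp {χ : Euc d → Euc d} {t : ℝ} (h : IsSimilarityWithRatio χ t)
    (x : Euc d) :
    χ x = χ 0 + ∑ i : Fin d, x i • (χ (EuclideanSpace.single i 1) - χ 0) := by
  classical
  set L : Euc d → Euc d := fun z => χ z - χ 0 with hLdef
  set v : Euc d := ∑ i : Fin d, x i • L (EuclideanSpace.single i 1) with hv
  have hinner := simil_inner h
  have hsingle : ∀ i : Fin d, (inner ℝ x (EuclideanSpace.single i (1:ℝ)) : ℝ) = x i := by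
    intro i
    rw [EuclideanSpace.inner_single_right]
    simp
  have hss : ∀ i j : Fin d,
      (inner ℝ (EuclideanSpace.single i (1:ℝ)) (EuclideanSpace.single j (1:ℝ)) : ℝ)
        = if i = j then 1 else 0 := by
    intro i j
    rw [EuclideanSpace.inner_single_left]
    by_cases hij : i = j
    · subst hij; simp [EuclideanSpace.single_apply]
    · simp [EuclideanSpace.single_apply, hij, Ne.symm hij]
  have hxx : (inner ℝ x x : ℝ) = ∑ i : Fin d, x i * x i := by
    rw [PiLp.inner_apply]
    rfl
  have hLv : (inner ℝ (L x) v : ℝ) = t ^ 2 * ∑ i : Fin d, x i * x i := by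
    rw [hv, inner_sum, Finset.mul_sum]
    apply Finset.sum_congr rfl
    intro i _
    rw [real_inner_smul_right, hinner x (EuclideanSpace.single i 1), hsingle i]
    ring
  have hvv : (inner ℝ v v : ℝ) = t ^ 2 * ∑ i : Fin d, x i * x i := by
    rw [hv, sum_inner, Finset.mul_sum]
    apply Finset.sum_congr rfl
    intro i _
    rw [real_inner_smul_left, inner_sum]
    have : ∀ j : Fin d, (inner ℝ (L (EuclideanSpace.single i 1))
        (x j • L (EuclideanSpace.single j 1)) : ℝ) = if i = j then t ^ 2 * x j else 0 := by
      intro j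
      rw [real_inner_smul_right, hinner]
      rw [hss i j]
      by_cases hij : i = j <;> simp [hij] <;> ring
    rw [Finset.sum_congr rfl fun j _ => this j]
    rw [Finset.sum_ite_eq (Finset.univ) i (fun j => t ^ 2 * x j)]
    simp
    ring
  have hLL : (inner ℝ (L x) (L x) : ℝ) = t ^ 2 * ∑ i : Fin d, x i * x i := by
    rw [hinner x x, hxx]
  have hzero : ‖L x - v‖ ^ 2 = 0 := by
    rw [norm_sub_sq_real (L x) v]
    rw [← real_inner_self_eq_norm_sq (L x), ← real_inner_self_eq_norm_sq v]
    rw [hLL, hLv, hvv]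
    ring
  have : L x = v := by
    have h1 : ‖L x - v‖ = 0 := by
      have := sq_eq_zero_iff.1 hzero
      exact this
    rw [norm_eq_zero, sub_eq_zero] at h1
    exact h1
  have hfin : χ x - χ 0 = ∑ i : Fin d, x i • (χ (EuclideanSpace.single i 1) - χ 0) := this
  exact sub_eq_iff_eq_add'.1 hfin

end Part5
end Micro

namespace Micro
section Part6
variable {d : ℕ} {Λ : Type} [Fintype Λ] [Nonempty Λ]

def smax (d : ℕ) : ℝ := max (Real.sqrt d) 1

theorem smax_pos : (0:ℝ) < smax d := lt_of_lt_of_le one_pos (le_max_right _ _)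
theorem one_le_smax : (1:ℝ) ≤ smax d := le_max_right _ _
theorem sqrt_le_smax : Real.sqrt d ≤ smax d := le_max_left _ _

theorem exists_word {Φ : Λ → Euc d → Euc d} {r : Λ → ℝ}
    (hΦ : ∀ i, IsContractingSimilarity (Φ i) (r i))
    {K : Set (Euc d)} (hK : IsAttractor Φ K)
    {T : Set (List Λ)} (hT : IsTree T)
    {δ : ℝ} (hδ0 : 0 < δ) (hδ1 : δ ≤ 1)
    (hδ : ∀ i j : Λ, i ≠ j → ∀ x ∈ Φ i '' K, ∀ y ∈ Φ j '' K, δ ≤ dist x y)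
    {ψ : Euc d → Euc d} {R : ℝ} (hR : 1 ≤ R) (hψ : IsSimilarityWithRatio ψ R)
    (hne : (unitCube d ∩ ψ '' treeProj Φ T).Nonempty) :
    ∃ w ∈ T, (1 ≤ R * wordRatio r w ∧ R * wordRatio r w ≤ 2 * smax d / (δ * rMin r)) ∧
      unitCube d ∩ ψ '' treeProj Φ T =
        unitCube d ∩ (fun z => ψ (wordMap Φ w z)) '' treeProj Φ (descTree T w) := by
  classical
  have hr : ∀ i, 0 < r i := fun i => (hΦ i).1
  have hr1 : ∀ i, r i < 1 := fun i => (hΦ i).2.1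
  have hrm0 : 0 < rMin r := rMin_pos hr
  have hrm1 : rMin r < 1 := rMin_lt_one hr1
  set Rs : ℝ := 2 * smax d / (δ * rMin r) with hRs
  have hden : 0 < δ * rMin r := mul_pos hδ0 hrm0
  have hden1 : δ * rMin r ≤ 1 := by nlinarith
  have hRsge : 2 * smax d ≤ Rs := by
    rw [hRs, le_div_iff₀ hden]
    nlinarith [smax_pos (d := d)]
  have hRspos : 0 < Rs := by nlinarith [smax_pos (d := d)]
  by_cases hcase : R ≤ Rs
  · refine ⟨[], hT.1, ⟨?_, ?_⟩, ?_⟩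
    · simpa [wordRatio] using hR
    · simpa [wordRatio] using hcase
    · rw [descTree_nil]
      rfl
  · push_neg at hcase
    have hRpos : 0 < R := lt_of_lt_of_le one_pos hR
    set ρ : ℝ := Rs / R with hρdef
    have hρpos : 0 < ρ := div_pos hRspos hRpos
    have hρ1 : ρ < 1 := (div_lt_one hRpos).2 hcase
    have hRρ : R * ρ = Rs := by
      rw [hρdef]; field_simp
    obtain ⟨q0, hq0Q, z0, ⟨x0, hx0, rfl⟩, rfl⟩ :
        ∃ q0, q0 ∈ unitCube d ∧ ∃ z0, (∃ x0 ∈ treeBoundary T, codeMap Φ x0 = z0) ∧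
          ψ z0 = q0 := by
      obtain ⟨q0, hq0Q, z0, hz0, hq0⟩ := hne
      exact ⟨q0, hq0Q, z0, hz0, hq0⟩
    obtain ⟨w, hwsec, hwT, j0, hj0, hcode0⟩ := exists_piece hΦ (r := r) hρpos hρ1 hx0
    have hwlow : ρ * rMin r < wordRatio r w := section_ratio_gt hr hρ1 hwsec
    refine ⟨w, hwT, ⟨?_, ?_⟩, ?_⟩
    · -- 1 ≤ R * wordRatio r w
      have h1 : R * (ρ * rMin r) < R * wordRatio r w :=
        mul_lt_mul_of_pos_left hwlow hRpos
      have h2 : R * (ρ * rMin r) = Rs * rMin r := by rw [← hRρ]; ring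
      have h3 : 2 * smax d * rMin r ≤ Rs * rMin r := mul_le_mul_of_nonneg_right hRsge hrm0.le
      have h5 : Rs * rMin r = 2 * smax d / δ := by
        rw [hRs]; field_simp
      have h6 : 2 * smax d ≤ 2 * smax d / δ := by
        rw [le_div_iff₀ hδ0]; nlinarith [smax_pos (d := d)]
      linarith [one_le_smax (d := d)]
    · -- upper bound
      have h1 : wordRatio r w ≤ ρ := hwsec.1
      have := mul_le_mul_of_nonneg_left h1 hRpos.le
      rw [hRρ] at this
      exact this
    · -- set equality
      apply Set.Subset.antisymm
      · rintro q ⟨hqQ, y, ⟨xx, hxx, rfl⟩, rfl⟩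
        obtain ⟨u, husec, huT, j1, hj1, hcode1⟩ := exists_piece hΦ (r := r) hρpos hρ1 hxx
        by_cases huw : u = w
        · subst huw
          refine ⟨hqQ, codeMap Φ j1, ⟨j1, hj1, rfl⟩, ?_⟩
          show ψ (wordMap Φ u (codeMap Φ j1)) = ψ (codeMap Φ xx)
          rw [← hcode1]
        · exfalso
          have hnwu : ¬ w <+: u := section_incomparable hr hr1 hwsec husec (Ne.symm huw)
          have hnuw : ¬ u <+: w := section_incomparable hr hr1 husec hwsec huw
          have hxxK : codeMap Φ xx ∈ wordMap Φ u '' K := by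
            rw [hcode1]
            exact ⟨codeMap Φ j1, codeMap_mem_K hΦ hK j1, rfl⟩
          have hx0K : codeMap Φ x0 ∈ wordMap Φ w '' K := by
            rw [hcode0]
            exact ⟨codeMap Φ j0, codeMap_mem_K hΦ hK j0, rfl⟩
          have hsep := word_sep hΦ hK hδ0 hδ hnuw hnwu hxxK hx0K
          have hulow : ρ * rMin r < wordRatio r u := section_ratio_gt hr hρ1 husec
          have hdq : dist (ψ (codeMap Φ xx)) (ψ (codeMap Φ x0)) =
              R * dist (codeMap Φ xx) (codeMap Φ x0) := hψ _ _
          have hge : 2 * smax d ≤ dist (ψ (codeMap Φ xx)) (ψ (codeMap Φ x0)) := by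
            rw [hdq]
            have e1 : δ * (ρ * rMin r) ≤ δ * wordRatio r u :=
              mul_le_mul_of_nonneg_left hulow.le hδ0.le
            have e2 : δ * wordRatio r u ≤ dist (codeMap Φ xx) (codeMap Φ x0) := hsep
            have e3 : R * (δ * (ρ * rMin r)) ≤ R * dist (codeMap Φ xx) (codeMap Φ x0) := by
              apply mul_le_mul_of_nonneg_left (le_trans e1 e2) hRpos.le
            have e4 : R * (δ * (ρ * rMin r)) = 2 * smax d := by
              have : R * ρ = Rs := hRρ
              calc R * (δ * (ρ * rMin r)) = (R * ρ) * (δ * rMin r) := by ring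
              _ = Rs * (δ * rMin r) := by rw [this]
              _ = 2 * smax d := by rw [hRs]; field_simp
            linarith
          have hle : dist (ψ (codeMap Φ xx)) (ψ (codeMap Φ x0)) ≤ Real.sqrt d :=
            dist_le_of_mem_unitCube hqQ hq0Q
          have := sqrt_le_smax (d := d)
          nlinarith [smax_pos (d := d)]
      · rintro q ⟨hqQ, z, hz, rfl⟩
        refine ⟨hqQ, wordMap Φ w z, piece_subset hΦ hT w ⟨z, hz, rfl⟩, rfl⟩

end Part6
end Micro

theorem stmt1 {d : ℕ} {Λ : Type} [Fintype Λ] [Nonempty Λ]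
    (Φ : Λ → Euc d → Euc d) (r : Λ → ℝ)
    (hΦ : ∀ i, IsContractingSimilarity (Φ i) (r i))
    (K : Set (Euc d)) (hK : IsAttractor Φ K)
    (hSSC : SatisfiesSSC Φ K)
    (F : Set (Euc d)) (hFc : IsCompact F) (hFne : F.Nonempty)
    (T : Set (List Λ)) (hT : IsTree T) (hTnl : HasNoLeaves T)
    (hFT : F = treeProj Φ T) :
    ∀ M : Set (Euc d), IsMicroset F M →
      ∃ (A : Set (Euc d)) (ψ : Euc d → Euc d),
        inClosureBranchSets Φ T A ∧ IsExpandingSimilarity ψ ∧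
        interior (unitCube d) ∩ ψ '' A ⊆ M ∧ M ⊆ unitCube d ∩ ψ '' A := by
  classical
  subst hFT
  intro M hM
  obtain ⟨hMc, hMne, B, hBmini, hBconv⟩ := hM
  have hr : ∀ i, 0 < r i := fun i => (hΦ i).1
  have hr1 : ∀ i, r i < 1 := fun i => (hΦ i).2.1
  -- miniset data
  have hmini : ∀ n : ℕ, ∃ (g : Euc d → Euc d) (R : ℝ), 1 ≤ R ∧ IsSimilarityWithRatio g R ∧
      B n = unitCube d ∩ g '' treeProj Φ T := by
    intro n
    obtain ⟨hne, g, ⟨R, hR, hsim⟩, heq⟩ := hBmini n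
    exact ⟨g, R, hR, hsim, heq⟩
  choose ψ R hR hψ hBeq using hmini
  have hBne : ∀ n, (B n).Nonempty := fun n => (hBmini n).1
  -- separation constant
  obtain ⟨δ, hδ0, hδ1, hδ⟩ := Micro.exists_delta hΦ hK hSSC
  set Rs : ℝ := 2 * Micro.smax d / (δ * rMin r) with hRsdef
  -- choose the word for each n
  have hword : ∀ n : ℕ, ∃ w, w ∈ T ∧ (1 ≤ R n * wordRatio r w ∧ R n * wordRatio r w ≤ Rs) ∧
      unitCube d ∩ ψ n '' treeProj Φ T = unitCube d ∩ (fun z => ψ n (wordMap Φ w z)) ''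
        treeProj Φ (descTree T w) := by
    intro n
    have hne : (unitCube d ∩ ψ n '' treeProj Φ T).Nonempty := by
      rw [← hBeq n]; exact hBne n
    obtain ⟨w, hwT, hrat, heq⟩ := Micro.exists_word hΦ hK hT hδ0 hδ1 hδ (hR n) (hψ n) hne
    exact ⟨w, hwT, hrat, heq⟩
  choose w hwT hwrat hweq using hword
  -- the rescaled similarities
  have hχsim : ∀ n, IsSimilarityWithRatio (fun z => ψ n (wordMap Φ (w n) z))
      (R n * wordRatio r (w n)) :=
    fun n => Micro.simil_comp (hψ n) (Micro.wordMap_similarity hΦ (w n))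
  have ht1 : ∀ n, 1 ≤ R n * wordRatio r (w n) := fun n => (hwrat n).1
  have htRs : ∀ n, R n * wordRatio r (w n) ≤ Rs := fun n => (hwrat n).2
  have htpos : ∀ n, (0:ℝ) < R n * wordRatio r (w n) := fun n => lt_of_lt_of_le one_pos (ht1 n)
  have hRs1 : (1:ℝ) ≤ Rs := le_trans (ht1 0) (htRs 0)
  have hGsubK : ∀ n, treeProj Φ (descTree T (w n)) ⊆ K :=
    fun n => Micro.treeProj_subset_K hΦ (r := r) hK _
  have hGne : ∀ n, (treeProj Φ (descTree T (w n))).Nonempty :=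
    fun n => (Micro.boundary_nonempty hTnl (hwT n)).image _
  have hBeq' : ∀ n, B n = unitCube d ∩ (fun z => ψ n (wordMap Φ (w n) z)) ''
      treeProj Φ (descTree T (w n)) := fun n => (hBeq n).trans (hweq n)
  -- bound for K
  obtain ⟨BK0, hBK0⟩ := isBounded_iff_forall_norm_le.1 hK.1.isBounded
  set BK : ℝ := max BK0 0 with hBKdef
  have hBK : ∀ x ∈ K, ‖x‖ ≤ BK := fun x hx => le_trans (hBK0 x hx) (le_max_left _ _)
  have hBKnn : (0:ℝ) ≤ BK := le_max_right _ _
  set Cb : ℝ := Rs * BK + Micro.smax d with hCbdef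
  -- compact space of nonempty compacts of K
  haveI hKcs : CompactSpace ↥K := isCompact_iff_compactSpace.mp hK.1
  have hGKex : ∀ n, ∃ km : TopologicalSpace.NonemptyCompacts ↥K,
      Subtype.val '' (km : Set ↥K) = closure (treeProj Φ (descTree T (w n))) := by
    intro n
    have hcl : IsClosed (Subtype.val ⁻¹' closure (treeProj Φ (descTree T (w n))) : Set ↥K) :=
      isClosed_closure.preimage continuous_subtype_val
    obtain ⟨y, hy⟩ := hGne n
    have hyK : y ∈ K := hGsubK n hy
    refine ⟨⟨⟨_, hcl.isCompact⟩, ⟨⟨y, hyK⟩, subset_closure hy⟩⟩, ?_⟩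
    show Subtype.val '' (Subtype.val ⁻¹' closure (treeProj Φ (descTree T (w n))) : Set ↥K) =
      closure (treeProj Φ (descTree T (w n)))
    rw [Set.image_preimage_eq_inter_range, Subtype.range_coe]
    exact Set.inter_eq_self_of_subset_left
      (closure_minimal (hGsubK n) hK.1.isClosed)
  choose GK hGKval using hGKex
  -- the extraction
  have hScomp : IsCompact ((Set.univ.pi fun _ : Fin d => closedBall (0 : Euc d) Rs) ×ˢ
      (closedBall (0 : Euc d) Cb ×ˢ (Set.Icc (1:ℝ) Rs ×ˢ
        (Set.univ : Set (TopologicalSpace.NonemptyCompacts ↥K))))) := by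
    refine IsCompact.prod (isCompact_univ_pi fun _ => isCompact_closedBall _ _) ?_
    exact (isCompact_closedBall _ _).prod ((isCompact_Icc).prod isCompact_univ)
  have hYS : ∀ n : ℕ,
      ((fun i : Fin d => ψ n (wordMap Φ (w n) (EuclideanSpace.single i 1)) -
          ψ n (wordMap Φ (w n) 0)),
        ψ n (wordMap Φ (w n) 0), R n * wordRatio r (w n), GK n) ∈
      ((Set.univ.pi fun _ : Fin d => closedBall (0 : Euc d) Rs) ×ˢ
        (closedBall (0 : Euc d) Cb ×ˢ (Set.Icc (1:ℝ) Rs ×ˢ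
          (Set.univ : Set (TopologicalSpace.NonemptyCompacts ↥K))))) := by
    intro n
    obtain ⟨q, hq⟩ := hBne n
    rw [hBeq' n] at hq
    obtain ⟨hqQ, z, hzG, hzq⟩ := hq
    have hzK : z ∈ K := hGsubK n hzG
    refine ⟨fun i _ => ?_, ?_, ⟨ht1 n, htRs n⟩, Set.mem_univ _⟩
    · rw [mem_closedBall_zero_iff]
      have h1 : ‖ψ n (wordMap Φ (w n) (EuclideanSpace.single i 1)) -
          ψ n (wordMap Φ (w n) 0)‖ =
          (R n * wordRatio r (w n)) * ‖EuclideanSpace.single i (1:ℝ) - 0‖ :=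
        Micro.simil_norm_sub (hχsim n) _ _
      rw [h1, sub_zero, EuclideanSpace.norm_single, norm_one, mul_one]
      exact htRs n
    · rw [mem_closedBall_zero_iff]
      have h2 : ‖ψ n (wordMap Φ (w n) 0) - ψ n (wordMap Φ (w n) z)‖ =
          (R n * wordRatio r (w n)) * ‖(0:Euc d) - z‖ :=
        Micro.simil_norm_sub (hχsim n) _ _
      have h3 : ‖ψ n (wordMap Φ (w n) 0)‖ ≤
          ‖ψ n (wordMap Φ (w n) 0) - ψ n (wordMap Φ (w n) z)‖ +
            ‖ψ n (wordMap Φ (w n) z)‖ := by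
        have := norm_add_le (ψ n (wordMap Φ (w n) 0) - ψ n (wordMap Φ (w n) z))
          (ψ n (wordMap Φ (w n) z))
        rwa [sub_add_cancel] at this
      have h4 : ‖ψ n (wordMap Φ (w n) z)‖ ≤ Micro.smax d := by
        have : ψ n (wordMap Φ (w n) z) = q := hzq
        rw [this]
        exact le_trans (Micro.norm_le_of_mem_unitCube hqQ) Micro.sqrt_le_smax
      have h5 : (R n * wordRatio r (w n)) * ‖(0:Euc d) - z‖ ≤ Rs * BK := by
        rw [zero_sub, norm_neg]
        exact mul_le_mul (htRs n) (hBK z hzK) (norm_nonneg z) (le_trans zero_le_one hRs1)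
      calc ‖ψ n (wordMap Φ (w n) 0)‖ ≤ _ + _ := h3
      _ ≤ Rs * BK + Micro.smax d := by rw [h2]; exact add_le_add h5 h4
  obtain ⟨Yl, hYlS, m, hmono, hconv⟩ := hScomp.tendsto_subseq hYS
  -- component convergences
  have hcomp1 : Tendsto (fun n => (fun i : Fin d =>
      ψ (m n) (wordMap Φ (w (m n)) (EuclideanSpace.single i 1)) -
        ψ (m n) (wordMap Φ (w (m n)) 0))) atTop (nhds Yl.1) :=
    (continuous_fst.tendsto Yl).comp hconv
  have hsnd : Tendsto (fun n => (ψ (m n) (wordMap Φ (w (m n)) 0),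
      R (m n) * wordRatio r (w (m n)), GK (m n))) atTop (nhds Yl.2) :=
    (continuous_snd.tendsto Yl).comp hconv
  have hb : Tendsto (fun n => ψ (m n) (wordMap Φ (w (m n)) 0)) atTop (nhds Yl.2.1) :=
    (continuous_fst.tendsto Yl.2).comp hsnd
  have hsnd2 : Tendsto (fun n => (R (m n) * wordRatio r (w (m n)), GK (m n))) atTop
      (nhds Yl.2.2) := (continuous_snd.tendsto Yl.2).comp hsnd
  have htl : Tendsto (fun n => R (m n) * wordRatio r (w (m n))) atTop (nhds Yl.2.2.1) :=
    (continuous_fst.tendsto Yl.2.2).comp hsnd2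
  have hAl : Tendsto (fun n => GK (m n)) atTop (nhds Yl.2.2.2) :=
    (continuous_snd.tendsto Yl.2.2).comp hsnd2
  have hui : ∀ i : Fin d, Tendsto (fun n =>
      ψ (m n) (wordMap Φ (w (m n)) (EuclideanSpace.single i 1)) -
        ψ (m n) (wordMap Φ (w (m n)) 0)) atTop (nhds (Yl.1 i)) :=
    fun i => tendsto_pi_nhds.1 hcomp1 i
  -- the limit similarity and limit set
  set ψl : Euc d → Euc d := fun x => Yl.2.1 + ∑ i : Fin d, x i • Yl.1 i with hψldef
  set A : Set (Euc d) := Subtype.val '' (Yl.2.2.2 : Set ↥K) with hAdef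
  have htl1 : (1:ℝ) ≤ Yl.2.2.1 := hYlS.2.2.1.1
  have htlRs : Yl.2.2.1 ≤ Rs := hYlS.2.2.1.2
  -- pointwise convergence of the maps
  have hptconv : ∀ x : Euc d, Tendsto (fun n => ψ (m n) (wordMap Φ (w (m n)) x)) atTop
      (nhds (ψl x)) := by
    intro x
    have h1 : Tendsto (fun n => ψ (m n) (wordMap Φ (w (m n)) 0) + ∑ i : Fin d, x i •
        (ψ (m n) (wordMap Φ (w (m n)) (EuclideanSpace.single i 1)) -
          ψ (m n) (wordMap Φ (w (m n)) 0))) atTop (nhds (Yl.2.1 + ∑ i : Fin d, x i • Yl.1 i)) :=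
      hb.add (tendsto_finset_sum _ fun i _ => (hui i).const_smul (x i))
    exact h1.congr fun n => (Micro.simil_decomp (hχsim (m n)) x).symm
  -- ψl is a similarity with ratio tl
  have hψlsim : IsSimilarityWithRatio ψl Yl.2.2.1 := by
    intro x y
    have h1 : Tendsto (fun n => dist (ψ (m n) (wordMap Φ (w (m n)) x))
        (ψ (m n) (wordMap Φ (w (m n)) y))) atTop (nhds (dist (ψl x) (ψl y))) :=
      (hptconv x).dist (hptconv y)
    have h3 : (fun n => dist (ψ (m n) (wordMap Φ (w (m n)) x))
        (ψ (m n) (wordMap Φ (w (m n)) y))) =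
        fun n => (R (m n) * wordRatio r (w (m n))) * dist x y :=
      funext fun n => hχsim (m n) x y
    rw [h3] at h1
    exact tendsto_nhds_unique h1 (htl.mul_const _)
  have hψlcont : Continuous ψl :=
    Micro.simil_continuous hψlsim (le_trans zero_le_one htl1)
  -- the uniform error bound
  set εs : ℕ → ℝ := fun n => dist (ψ (m n) (wordMap Φ (w (m n)) 0)) Yl.2.1 +
      BK * ∑ i : Fin d, ‖(ψ (m n) (wordMap Φ (w (m n)) (EuclideanSpace.single i 1)) -
        ψ (m n) (wordMap Φ (w (m n)) 0)) - Yl.1 i‖ with hεsdef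
  have hunif : ∀ n, ∀ x ∈ K, dist (ψ (m n) (wordMap Φ (w (m n)) x)) (ψl x) ≤ εs n := by
    intro n x hx
    rw [hεsdef, hψldef, dist_eq_norm, Micro.simil_decomp (hχsim (m n)) x]
    have heq : (ψ (m n) (wordMap Φ (w (m n)) 0) + ∑ i : Fin d, x i •
        (ψ (m n) (wordMap Φ (w (m n)) (EuclideanSpace.single i 1)) -
          ψ (m n) (wordMap Φ (w (m n)) 0))) - (Yl.2.1 + ∑ i : Fin d, x i • Yl.1 i) =
        (ψ (m n) (wordMap Φ (w (m n)) 0) - Yl.2.1) + ∑ i : Fin d, x i •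
          ((ψ (m n) (wordMap Φ (w (m n)) (EuclideanSpace.single i 1)) -
            ψ (m n) (wordMap Φ (w (m n)) 0)) - Yl.1 i) := by
      rw [Finset.sum_congr rfl fun i _ => smul_sub (x i) _ (Yl.1 i)]
      rw [Finset.sum_sub_distrib]
      abel
    rw [heq]
    calc ‖_ + _‖ ≤ ‖ψ (m n) (wordMap Φ (w (m n)) 0) - Yl.2.1‖ +
        ‖∑ i : Fin d, x i • ((ψ (m n) (wordMap Φ (w (m n)) (EuclideanSpace.single i 1)) -
          ψ (m n) (wordMap Φ (w (m n)) 0)) - Yl.1 i)‖ := norm_add_le _ _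
    _ ≤ dist (ψ (m n) (wordMap Φ (w (m n)) 0)) Yl.2.1 +
        BK * ∑ i : Fin d, ‖(ψ (m n) (wordMap Φ (w (m n)) (EuclideanSpace.single i 1)) -
          ψ (m n) (wordMap Φ (w (m n)) 0)) - Yl.1 i‖ := by
      rw [dist_eq_norm]
      apply add_le_add_right
      calc ‖∑ i : Fin d, x i • _‖ ≤ ∑ i : Fin d, ‖x i •
          ((ψ (m n) (wordMap Φ (w (m n)) (EuclideanSpace.single i 1)) -
            ψ (m n) (wordMap Φ (w (m n)) 0)) - Yl.1 i)‖ := norm_sum_le _ _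
      _ ≤ ∑ i : Fin d, BK * ‖(ψ (m n) (wordMap Φ (w (m n)) (EuclideanSpace.single i 1)) -
            ψ (m n) (wordMap Φ (w (m n)) 0)) - Yl.1 i‖ := by
          apply Finset.sum_le_sum
          intro i _
          rw [norm_smul, Real.norm_eq_abs]
          apply mul_le_mul_of_nonneg_right _ (norm_nonneg _)
          exact le_trans (Micro.coord_le_norm x i) (hBK x hx)
      _ = BK * ∑ i : Fin d, _ := (Finset.mul_sum _ _ _).symm
  have hεconv : Tendsto εs atTop (nhds 0) := by
    rw [hεsdef]
    have h1 : Tendsto (fun n => dist (ψ (m n) (wordMap Φ (w (m n)) 0)) Yl.2.1) atTop (nhds 0) :=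
      tendsto_iff_dist_tendsto_zero.1 hb
    have h2 : ∀ i : Fin d, Tendsto (fun n =>
        ‖(ψ (m n) (wordMap Φ (w (m n)) (EuclideanSpace.single i 1)) -
          ψ (m n) (wordMap Φ (w (m n)) 0)) - Yl.1 i‖) atTop (nhds 0) := by
      intro i
      have := tendsto_iff_dist_tendsto_zero.1 (hui i)
      simpa [dist_eq_norm] using this
    have h3 : Tendsto (fun n => BK * ∑ i : Fin d,
        ‖(ψ (m n) (wordMap Φ (w (m n)) (EuclideanSpace.single i 1)) -
          ψ (m n) (wordMap Φ (w (m n)) 0)) - Yl.1 i‖) atTop (nhds 0) := by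
      have hsum : Tendsto (fun n => ∑ i : Fin d,
          ‖(ψ (m n) (wordMap Φ (w (m n)) (EuclideanSpace.single i 1)) -
            ψ (m n) (wordMap Φ (w (m n)) 0)) - Yl.1 i‖) atTop (nhds 0) := by
        have := tendsto_finset_sum (Finset.univ : Finset (Fin d)) (fun i _ => h2 i)
        simpa using this
      simpa using hsum.const_mul BK
    simpa using h1.add h3
  -- Hausdorff convergence of the branch sets
  have hGconv : Tendsto (fun n => hausdorffDist (treeProj Φ (descTree T (w (m n)))) A)
      atTop (nhds 0) := by
    have h1 : Tendsto (fun n => dist (GK (m n)) Yl.2.2.2) atTop (nhds 0) :=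
      tendsto_iff_dist_tendsto_zero.1 hAl
    apply Tendsto.congr _ h1
    intro n
    rw [Metric.NonemptyCompacts.dist_eq]
    rw [← Metric.hausdorffDist_image (isometry_subtype_coe)]
    rw [hGKval (m n), hAdef, Metric.hausdorffDist_closure₁]
  -- properties of A
  have hAcomp : IsCompact A := Yl.2.2.2.isCompact.image continuous_subtype_val
  have hAne : A.Nonempty := Yl.2.2.2.nonempty.image _
  have hAsubK : A ⊆ K := by
    rw [hAdef]
    rintro x ⟨⟨x', hx'⟩, -, rfl⟩
    exact hx'
  -- auxiliary boundedness facts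
  have hBsub : ∀ k, B k ⊆ unitCube d := by
    intro k
    rw [hBeq' k]
    exact Set.inter_subset_left
  have hBbdd : ∀ k, Bornology.IsBounded (B k) :=
    fun k => Micro.unitCube_isBounded.subset (hBsub k)
  have hGbdd : ∀ k, Bornology.IsBounded (treeProj Φ (descTree T (w k))) :=
    fun k => hK.1.isBounded.subset (hGsubK k)
  have hBconv' : Tendsto (fun n => hausdorffDist (B (m n)) M) atTop (nhds 0) :=
    hBconv.comp hmono.tendsto_atTop
  have hrecip : Tendsto (fun n : ℕ => (1:ℝ)/(n+1)) atTop (nhds 0) :=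
    tendsto_one_div_add_atTop_nhds_zero_nat
  refine ⟨A, ψl, ⟨hAcomp, hAne, fun n => w (m n), fun n => hwT (m n), hGconv⟩,
    ⟨Yl.2.2.1, htl1, hψlsim⟩, ?_, ?_⟩
  · -- interior Q ∩ ψl '' A ⊆ M
    rintro x ⟨hxint, a, haA, rfl⟩
    obtain ⟨ε, hε, hball⟩ := Metric.isOpen_iff.1 isOpen_interior _ hxint
    have haK : a ∈ K := hAsubK haA
    have hp : ∀ n, ∃ p ∈ treeProj Φ (descTree T (w (m n))), dist a p <
        hausdorffDist (treeProj Φ (descTree T (w (m n)))) A + 1/(n+1) := by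
      intro n
      have hnt : EMetric.hausdorffEdist A (treeProj Φ (descTree T (w (m n)))) ≠ ⊤ :=
        Metric.hausdorffEdist_ne_top_of_nonempty_of_bounded hAne (hGne (m n))
          hAcomp.isBounded (hGbdd (m n))
      have h1 : infDist a (treeProj Φ (descTree T (w (m n)))) ≤
          hausdorffDist A (treeProj Φ (descTree T (w (m n)))) :=
        infDist_le_hausdorffDist_of_mem haA hnt
      rw [hausdorffDist_comm] at h1
      have h2 : infDist a (treeProj Φ (descTree T (w (m n)))) <
          hausdorffDist (treeProj Φ (descTree T (w (m n)))) A + 1/(n+1) :=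
        lt_of_le_of_lt h1 (lt_add_of_pos_right _ (by positivity))
      exact (infDist_lt_iff (hGne (m n))).1 h2
    choose p hpG hpd using hp
    have hpa : Tendsto (fun n => dist a (p n)) atTop (nhds 0) := by
      apply squeeze_zero (fun n => dist_nonneg) (fun n => (hpd n).le)
      simpa using hGconv.add hrecip
    have hq : Tendsto (fun n => dist (ψ (m n) (wordMap Φ (w (m n)) (p n))) (ψl a))
        atTop (nhds 0) := by
      apply squeeze_zero (fun n => dist_nonneg)
        (g := fun n => Rs * dist a (p n) + εs n)
      · intro n
        calc dist (ψ (m n) (wordMap Φ (w (m n)) (p n))) (ψl a)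
            ≤ dist (ψ (m n) (wordMap Φ (w (m n)) (p n))) (ψ (m n) (wordMap Φ (w (m n)) a)) +
              dist (ψ (m n) (wordMap Φ (w (m n)) a)) (ψl a) := dist_triangle _ _ _
        _ ≤ Rs * dist a (p n) + εs n := by
            apply add_le_add _ (hunif n a haK)
            rw [hχsim (m n) (p n) a, dist_comm (p n) a]
            exact mul_le_mul_of_nonneg_right (htRs (m n)) dist_nonneg
      · simpa using (hpa.const_mul Rs).add hεconv
    have hevent : ∀ᶠ n in atTop, dist (ψ (m n) (wordMap Φ (w (m n)) (p n))) (ψl a) < ε :=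
      hq.eventually (gt_mem_nhds hε)
    have hkey : ∀ n, dist (ψ (m n) (wordMap Φ (w (m n)) (p n))) (ψl a) < ε →
        infDist (ψl a) M ≤ dist (ψl a) (ψ (m n) (wordMap Φ (w (m n)) (p n))) +
          hausdorffDist (B (m n)) M := by
      intro n hn
      have hqQ : ψ (m n) (wordMap Φ (w (m n)) (p n)) ∈ unitCube d := by
        apply interior_subset
        apply hball
        rw [mem_ball]
        exact hn
      have hqB : ψ (m n) (wordMap Φ (w (m n)) (p n)) ∈ B (m n) := by
        rw [hBeq' (m n)]
        exact ⟨hqQ, p n, hpG n, rfl⟩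
      have hnt : EMetric.hausdorffEdist (B (m n)) M ≠ ⊤ :=
        Metric.hausdorffEdist_ne_top_of_nonempty_of_bounded (hBne (m n)) hMne
          (hBbdd (m n)) hMc.isBounded
      calc infDist (ψl a) M ≤ infDist (ψ (m n) (wordMap Φ (w (m n)) (p n))) M +
          dist (ψl a) (ψ (m n) (wordMap Φ (w (m n)) (p n))) := infDist_le_infDist_add_dist
      _ ≤ hausdorffDist (B (m n)) M + dist (ψl a) (ψ (m n) (wordMap Φ (w (m n)) (p n))) :=
          add_le_add_left (infDist_le_hausdorffDist_of_mem hqB hnt) _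
      _ = _ := add_comm _ _
    have hlim : Tendsto (fun n => dist (ψl a) (ψ (m n) (wordMap Φ (w (m n)) (p n))) +
        hausdorffDist (B (m n)) M) atTop (nhds 0) := by
      have h1 : Tendsto (fun n => dist (ψl a) (ψ (m n) (wordMap Φ (w (m n)) (p n))))
          atTop (nhds 0) := by
        apply Tendsto.congr _ hq
        intro n
        rw [dist_comm]
      simpa using h1.add hBconv'
    have hle : infDist (ψl a) M ≤ 0 :=
      ge_of_tendsto hlim (hevent.mono fun n hn => hkey n hn)
    exact (IsClosed.mem_iff_infDist_zero hMc.isClosed hMne).2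
      (le_antisymm hle infDist_nonneg)
  · -- M ⊆ Q ∩ ψl '' A
    intro x hxM
    have hy : ∀ n, ∃ y ∈ B (m n), dist x y < hausdorffDist (B (m n)) M + 1/(n+1) := by
      intro n
      have hnt : EMetric.hausdorffEdist M (B (m n)) ≠ ⊤ :=
        Metric.hausdorffEdist_ne_top_of_nonempty_of_bounded hMne (hBne (m n))
          hMc.isBounded (hBbdd (m n))
      have h1 : infDist x (B (m n)) ≤ hausdorffDist M (B (m n)) :=
        infDist_le_hausdorffDist_of_mem hxM hnt
      rw [hausdorffDist_comm] at h1
      exact (infDist_lt_iff (hBne (m n))).1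
        (lt_of_le_of_lt h1 (lt_add_of_pos_right _ (by positivity)))
    choose y hyB hyd using hy
    have hydist : Tendsto (fun n => dist x (y n)) atTop (nhds 0) := by
      apply squeeze_zero (fun n => dist_nonneg) (fun n => (hyd n).le)
      simpa using hBconv'.add hrecip
    have hytend : Tendsto y atTop (nhds x) := by
      rw [tendsto_iff_dist_tendsto_zero]
      simpa [dist_comm] using hydist
    have hxQ : x ∈ unitCube d :=
      Micro.unitCube_isClosed.mem_of_tendsto hytend
        (Eventually.of_forall fun n => hBsub (m n) (hyB n))
    have hz : ∀ n, ∃ z, z ∈ treeProj Φ (descTree T (w (m n))) ∧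
        ψ (m n) (wordMap Φ (w (m n)) z) = y n := by
      intro n
      have := hyB n
      rw [hBeq' (m n)] at this
      obtain ⟨-, z, hz1, hz2⟩ := this
      exact ⟨z, hz1, hz2⟩
    choose z hzG hzeq using hz
    have ha : ∀ n, ∃ a ∈ A, dist (z n) a <
        hausdorffDist (treeProj Φ (descTree T (w (m n)))) A + 1/(n+1) := by
      intro n
      have hnt : EMetric.hausdorffEdist (treeProj Φ (descTree T (w (m n)))) A ≠ ⊤ :=
        Metric.hausdorffEdist_ne_top_of_nonempty_of_bounded (hGne (m n)) hAne
          (hGbdd (m n)) hAcomp.isBounded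
      have h1 : infDist (z n) A ≤ hausdorffDist (treeProj Φ (descTree T (w (m n)))) A :=
        infDist_le_hausdorffDist_of_mem (hzG n) hnt
      exact (infDist_lt_iff hAne).1
        (lt_of_le_of_lt h1 (lt_add_of_pos_right _ (by positivity)))
    choose a haA had using ha
    have hza : Tendsto (fun n => dist (z n) (a n)) atTop (nhds 0) := by
      apply squeeze_zero (fun n => dist_nonneg) (fun n => (had n).le)
      simpa using hGconv.add hrecip
    have hfinal : Tendsto (fun n => dist x (ψl (a n))) atTop (nhds 0) := by
      apply squeeze_zero (fun n => dist_nonneg)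
        (g := fun n => dist x (y n) + (Rs * dist (z n) (a n) + εs n))
      · intro n
        calc dist x (ψl (a n)) ≤ dist x (y n) + dist (y n) (ψl (a n)) := dist_triangle _ _ _
        _ ≤ dist x (y n) + (Rs * dist (z n) (a n) + εs n) := by
            apply add_le_add_right
            calc dist (y n) (ψl (a n)) ≤
                dist (y n) (ψ (m n) (wordMap Φ (w (m n)) (a n))) +
                  dist (ψ (m n) (wordMap Φ (w (m n)) (a n))) (ψl (a n)) := dist_triangle _ _ _
            _ ≤ Rs * dist (z n) (a n) + εs n := by
                apply add_le_add _ (hunif n (a n) (hAsubK (haA n)))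
                rw [← hzeq n, hχsim (m n) (z n) (a n)]
                exact mul_le_mul_of_nonneg_right (htRs (m n)) dist_nonneg
      · have := hydist.add ((hza.const_mul Rs).add hεconv)
        simpa using this
    have hclosed : IsClosed (ψl '' A) := (hAcomp.image hψlcont).isClosed
    have htend : Tendsto (fun n => ψl (a n)) atTop (nhds x) := by
      rw [tendsto_iff_dist_tendsto_zero]
      simpa [dist_comm] using hfinal
    exact ⟨hxQ, hclosed.mem_of_tendsto htend
      (Eventually.of_forall fun n => ⟨a n, haA n, rfl⟩)⟩
end
end

section
/- Let F ⊆ ℝ^d be a non-empty compact set, let Φ = {φ_i}_{i∈Λ} be a similarity IFS, and let T ∈ 𝒯'_Λ be a tree with no leaves such that F = Γ_Φ(T). Then (i) every miniset M of a member of cl(S_Φ^T) is contained in a microset of F; and (ii) if M has the form M = Q ∩ ψ(A) for some A ∈ cl(S_Φ^T) and an expanding similarity map ψ, and Φ satisfies the open set condition with an OSC set U such that ψ⁻¹(Q) ⊆ U, then M is a microset of F. -/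
open Metric Filter Set
open scoped ENNReal NNReal

noncomputable section

set_option linter.unusedSectionVars false

section Aux
variable {d : ℕ}

theorem sim_lipschitz {f : Euc d → Euc d} {r : ℝ} (hr : 0 ≤ r) (h : IsSimilarityWithRatio f r) :
    LipschitzWith r.toNNReal f :=
  LipschitzWith.of_dist_le_mul fun x y => by rw [h x y, Real.coe_toNNReal r hr]

theorem sim_continuous {f : Euc d → Euc d} {r : ℝ} (hr : 0 ≤ r) (h : IsSimilarityWithRatio f r) :
    Continuous f := (sim_lipschitz hr h).continuous

theorem sim_injective {f : Euc d → Euc d} {r : ℝ} (hr : 0 < r) (h : IsSimilarityWithRatio f r) :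
    Function.Injective f := fun x y hxy => by
  have h1 := h x y
  rw [hxy, dist_self] at h1
  have h2 : dist x y = 0 := by nlinarith [dist_nonneg (x := x) (y := y)]
  exact dist_eq_zero.mp h2

theorem sim_comp {f g : Euc d → Euc d} {r s : ℝ} (hf : IsSimilarityWithRatio f r)
    (hg : IsSimilarityWithRatio g s) : IsSimilarityWithRatio (f ∘ g) (r * s) := fun x y => by
  simp only [Function.comp]; rw [hf, hg, mul_assoc]

theorem sim_surjective {f : Euc d → Euc d} {r : ℝ} (hr : 0 < r) (h : IsSimilarityWithRatio f r) :
    Function.Surjective f := by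
  set g : Euc d → Euc d := fun x => (r⁻¹ : ℝ) • f x with hg
  have hgi : Isometry g := by
    apply Isometry.of_dist_eq
    intro x y
    rw [hg]
    simp only [dist_smul₀, h x y, norm_inv, Real.norm_of_nonneg hr.le]
    field_simp
  have hsg : Function.Surjective g := by
    let gi := hgi.affineIsometryOfStrictConvexSpace
    let li := gi.linearIsometry
    let e := li.toLinearIsometryEquiv rfl
    intro y
    refine ⟨e.symm (y - g 0), ?_⟩
    have h1 : ∀ x : Euc d, g x = li x + g 0 := by
      intro x
      have := gi.toAffineMap.map_vadd (0 : Euc d) x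
      have h2 : gi.toAffineMap.linear x = li x := by
        rw [AffineIsometry.linear_eq_linearIsometry]; rfl
      simp [vadd_eq_add, h2, li.map_zero] at this
      exact this
    rw [h1]
    have h3 : li (e.symm (y - g 0)) = e (e.symm (y - g 0)) := rfl
    rw [h3, e.apply_symm_apply]; abel
  intro y
  obtain ⟨x, hx⟩ := hsg (r⁻¹ • y)
  refine ⟨x, ?_⟩
  have : f x = r • g x := by rw [hg]; simp [smul_smul, mul_inv_cancel₀ hr.ne']
  rw [this, hx, smul_smul, mul_inv_cancel₀ hr.ne', one_smul]

theorem sim_right_inv {f : Euc d → Euc d} {r : ℝ} (hr : 0 < r) (h : IsSimilarityWithRatio f r)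
    (y : Euc d) : f (Function.invFun f y) = y :=
  Function.rightInverse_invFun (sim_surjective hr h) y

theorem sim_left_inv {f : Euc d → Euc d} {r : ℝ} (hr : 0 < r) (h : IsSimilarityWithRatio f r)
    (x : Euc d) : Function.invFun f (f x) = x :=
  Function.leftInverse_invFun (sim_injective hr h) x

theorem sim_invFun {f : Euc d → Euc d} {r : ℝ} (hr : 0 < r) (h : IsSimilarityWithRatio f r) :
    IsSimilarityWithRatio (Function.invFun f) r⁻¹ := by
  intro x y
  have h1 : dist (f (Function.invFun f x)) (f (Function.invFun f y)) = dist x y := by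
    rw [sim_right_inv hr h, sim_right_inv hr h]
  rw [h _ _] at h1
  rw [← h1]; field_simp

section words
variable {Λ : Type} {Φ : Λ → Euc d → Euc d} {r : Λ → ℝ}

theorem wordMap_nil (z : Euc d) : wordMap Φ [] z = z := rfl
theorem wordMap_cons (a : Λ) (w : List Λ) (z : Euc d) :
    wordMap Φ (a :: w) z = Φ a (wordMap Φ w z) := rfl
theorem wordMap_append (v w : List Λ) (z : Euc d) :
    wordMap Φ (v ++ w) z = wordMap Φ v (wordMap Φ w z) := by
  simp [wordMap, List.foldr_append]

theorem wordRatio_nil : wordRatio r ([] : List Λ) = 1 := by simp [wordRatio]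
theorem wordRatio_cons (a : Λ) (w : List Λ) :
    wordRatio r (a :: w) = r a * wordRatio r w := by simp [wordRatio]

variable (hΦ : ∀ i, IsSimilarityWithRatio (Φ i) (r i))
include hΦ

theorem sim_wordMap (w : List Λ) : IsSimilarityWithRatio (wordMap Φ w) (wordRatio r w) := by
  induction w with
  | nil => intro x y; simp [wordMap_nil, wordRatio_nil]
  | cons a w ih =>
      intro x y
      rw [wordMap_cons, wordMap_cons, hΦ a _ _, ih x y, wordRatio_cons, mul_assoc]

end words

section ifs
variable {Λ : Type} [Fintype Λ] [Nonempty Λ] {Φ : Λ → Euc d → Euc d} {r : Λ → ℝ}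

def rmax (r : Λ → ℝ) : ℝ := Finset.univ.sup' Finset.univ_nonempty r

variable (hΦ : ∀ i, 0 < r i ∧ r i < 1 ∧ IsSimilarityWithRatio (Φ i) (r i))
include hΦ

theorem rmax_pos : 0 < rmax r := by
  obtain ⟨i⟩ := ‹Nonempty Λ›
  exact lt_of_lt_of_le (hΦ i).1 (Finset.le_sup' r (Finset.mem_univ i))

theorem rmax_lt_one : rmax r < 1 :=
  (Finset.sup'_lt_iff Finset.univ_nonempty).2 fun i _ => (hΦ i).2.1

theorem le_rmax (i : Λ) : r i ≤ rmax r := Finset.le_sup' r (Finset.mem_univ i)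

theorem wordRatio_pos (w : List Λ) : 0 < wordRatio r w := by
  induction w with
  | nil => simp [wordRatio_nil]
  | cons a w ih => rw [wordRatio_cons]; exact mul_pos (hΦ a).1 ih

theorem wordRatio_le_pow (w : List Λ) : wordRatio r w ≤ rmax r ^ w.length := by
  induction w with
  | nil => simp [wordRatio_nil]
  | cons a w ih =>
      rw [wordRatio_cons, List.length_cons, pow_succ']
      exact mul_le_mul (le_rmax hΦ a) ih (wordRatio_pos hΦ w).le (rmax_pos hΦ).le

theorem wordRatio_le_one (w : List Λ) : wordRatio r w ≤ 1 :=
  (wordRatio_le_pow hΦ w).trans (pow_le_one₀ (rmax_pos hΦ).le (rmax_lt_one hΦ).le)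

theorem wordRatio_le_rmax {w : List Λ} (hw : w ≠ []) : wordRatio r w ≤ rmax r := by
  cases w with
  | nil => simp at hw
  | cons a w =>
      rw [wordRatio_cons]
      calc r a * wordRatio r w ≤ rmax r * 1 :=
            mul_le_mul (le_rmax hΦ a) (wordRatio_le_one hΦ w) (wordRatio_pos hΦ w).le
              (rmax_pos hΦ).le
        _ = rmax r := mul_one _

end ifs

theorem ofFn_concat {Λ : Type} (x : ℕ → Λ) (n : ℕ) :
    (List.ofFn fun i : Fin (n + 1) => x i) = (List.ofFn fun i : Fin n => x i) ++ [x n] := by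
  rw [List.ofFn_succ']
  simp [Fin.castSucc, List.concat_eq_append]

section code
variable {Λ : Type} [Fintype Λ] [Nonempty Λ] {Φ : Λ → Euc d → Euc d} {r : Λ → ℝ}

def seqA (Φ : Λ → Euc d → Euc d) (x : ℕ → Λ) (n : ℕ) : Euc d :=
  wordMap Φ (List.ofFn fun i : Fin n => x i) 0

def Cmax (Φ : Λ → Euc d → Euc d) [Fintype Λ] [Nonempty Λ] : ℝ :=
  Finset.univ.sup' Finset.univ_nonempty fun i => dist (Φ i 0) 0

theorem Cmax_nonneg : 0 ≤ Cmax Φ := by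
  obtain ⟨i⟩ := ‹Nonempty Λ›
  exact le_trans dist_nonneg
    (Finset.le_sup' (f := fun i => dist (Φ i 0) 0) (Finset.mem_univ i))

theorem le_Cmax (i : Λ) : dist (Φ i 0) 0 ≤ Cmax Φ :=
  Finset.le_sup' (f := fun i => dist (Φ i 0) 0) (Finset.mem_univ i)

variable (hΦ : ∀ i, 0 < r i ∧ r i < 1 ∧ IsSimilarityWithRatio (Φ i) (r i))
include hΦ

theorem hΦsim : ∀ i, IsSimilarityWithRatio (Φ i) (r i) := fun i => (hΦ i).2.2

theorem dist_seqA (x : ℕ → Λ) (n : ℕ) :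
    dist (seqA Φ x n) (seqA Φ x (n + 1)) ≤ Cmax Φ * rmax r ^ n := by
  rw [seqA, seqA, ofFn_concat, wordMap_append]
  rw [sim_wordMap (hΦsim hΦ) _ _ _]
  calc wordRatio r (List.ofFn fun i : Fin n => x i) * dist (0 : Euc d) (wordMap Φ [x n] 0)
      ≤ rmax r ^ n * Cmax Φ := by
        apply mul_le_mul
        · have := wordRatio_le_pow hΦ (List.ofFn fun i : Fin n => x i)
          rwa [List.length_ofFn] at this
        · rw [dist_comm]
          exact le_Cmax (x n)
        · exact dist_nonneg
        · exact pow_nonneg (rmax_pos hΦ).le n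
    _ = Cmax Φ * rmax r ^ n := mul_comm _ _

theorem codeMap_tendsto (x : ℕ → Λ) :
    Tendsto (seqA Φ x) atTop (nhds (codeMap Φ x)) := by
  have hc : CauchySeq (seqA Φ x) :=
    cauchySeq_of_le_geometric (rmax r) (Cmax Φ) (rmax_lt_one hΦ) (dist_seqA hΦ x)
  obtain ⟨p, hp⟩ := cauchySeq_tendsto_of_complete hc
  have : codeMap Φ x = p := hp.limUnder_eq
  rw [this]; exact hp

theorem geom_partial_le (n : ℕ) :
    (∑ i ∈ Finset.range n, rmax r ^ i) ≤ 1 / (1 - rmax r) := by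
  have h1 : rmax r < 1 := rmax_lt_one hΦ
  have h0 : (0:ℝ) < rmax r := rmax_pos hΦ
  rw [geom_sum_eq (ne_of_lt h1)]
  have hrw : (rmax r ^ n - 1) / (rmax r - 1) = (1 - rmax r ^ n) / (1 - rmax r) := by
    rw [← neg_div_neg_eq]; ring_nf
  rw [hrw]
  gcongr
  · nlinarith [pow_nonneg h0.le n]

theorem dist_seqA_zero (x : ℕ → Λ) (n : ℕ) :
    dist (seqA Φ x n) 0 ≤ Cmax Φ / (1 - rmax r) := by
  have h0 : seqA Φ x 0 = 0 := by simp [seqA, wordMap_nil, List.ofFn_zero]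
  have := dist_le_range_sum_dist (seqA Φ x) n
  rw [h0] at this
  rw [dist_comm]
  calc dist (0 : Euc d) (seqA Φ x n) ≤ ∑ i ∈ Finset.range n, dist (seqA Φ x i) (seqA Φ x (i+1)) :=
        this
    _ ≤ ∑ i ∈ Finset.range n, Cmax Φ * rmax r ^ i :=
        Finset.sum_le_sum fun i _ => dist_seqA hΦ x i
    _ = Cmax Φ * ∑ i ∈ Finset.range n, rmax r ^ i := by rw [Finset.mul_sum]
    _ ≤ Cmax Φ * (1 / (1 - rmax r)) :=
        mul_le_mul_of_nonneg_left (geom_partial_le hΦ n) Cmax_nonneg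
    _ = Cmax Φ / (1 - rmax r) := by ring

theorem codeMap_dist_zero (x : ℕ → Λ) :
    dist (codeMap Φ x) 0 ≤ Cmax Φ / (1 - rmax r) := by
  have h1 : Tendsto (fun n => dist (seqA Φ x n) 0) atTop (nhds (dist (codeMap Φ x) 0)) :=
    ((codeMap_tendsto hΦ x).dist tendsto_const_nhds)
  exact le_of_tendsto h1 (Eventually.of_forall (dist_seqA_zero hΦ x))

end code

section trees
variable {Λ : Type}

def extSeq (v : List Λ) (x : ℕ → Λ) : ℕ → Λ := fun n =>
  if h : n < v.length then v.get ⟨n, h⟩ else x (n - v.length)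

theorem ofFn_extSeq_add (v : List Λ) (x : ℕ → Λ) (n : ℕ) :
    (List.ofFn fun i : Fin (v.length + n) => extSeq v x i)
      = v ++ List.ofFn fun i : Fin n => x i := by
  rw [List.ofFn_add]
  congr 1
  · apply List.ext_getElem (by simp)
    intro i h1 h2
    simp only [List.getElem_ofFn]
    rw [extSeq]
    simp only [List.length_ofFn] at h1
    rw [dif_pos (by simpa using h1)]
    simp [List.get_eq_getElem]
  · apply List.ext_getElem (by simp)
    intro i h1 h2
    simp only [List.getElem_ofFn]
    rw [extSeq]
    simp only [List.length_ofFn] at h1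
    rw [dif_neg (by simp)]
    simp

theorem ofFn_extSeq_le (v : List Λ) (x : ℕ → Λ) {n : ℕ} (hn : n ≤ v.length) :
    (List.ofFn fun i : Fin n => extSeq v x i) = v.take n := by
  apply List.ext_getElem (by simp [hn])
  intro i h1 h2
  simp only [List.getElem_ofFn]
  rw [extSeq]
  simp only [List.length_ofFn] at h1
  rw [dif_pos (lt_of_lt_of_le h1 hn)]
  simp [List.get_eq_getElem, List.getElem_take]

theorem extSeq_shift (x : ℕ → Λ) (n : ℕ) :
    extSeq (List.ofFn fun i : Fin n => x i) (fun k => x (n + k)) = x := by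
  funext j
  rw [extSeq]
  by_cases h : j < (List.ofFn fun i : Fin n => x i).length
  · rw [dif_pos h]; simp [List.get_eq_getElem]
  · rw [dif_neg h]
    simp only [List.length_ofFn] at h ⊢
    congr 1
    omega

variable {T : Set (List Λ)} (hT : IsTree T)
include hT

theorem extSeq_mem_boundary {v : List Λ} (hv : v ∈ T) {x : ℕ → Λ}
    (hx : x ∈ treeBoundary (descTree T v)) : extSeq v x ∈ treeBoundary T := by
  intro n
  rcases le_or_gt n v.length with h | h
  · rw [ofFn_extSeq_le v x h]
    exact hT.2 v hv _ (List.take_prefix n v)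
  · obtain ⟨m, rfl⟩ : ∃ m, n = v.length + m := ⟨n - v.length, by omega⟩
    rw [ofFn_extSeq_add]
    exact hx m

theorem shift_mem_boundary {x : ℕ → Λ} (hx : x ∈ treeBoundary T) (n : ℕ) :
    (fun k => x (n + k)) ∈ treeBoundary (descTree T (List.ofFn fun i : Fin n => x i)) := by
  intro m
  show (List.ofFn fun i : Fin n => x i) ++ _ ∈ T
  have h1 := extSeq_shift x n
  have h2 := ofFn_extSeq_add (List.ofFn fun i : Fin n => x i) (fun k => x (n + k)) m
  rw [h1] at h2
  rw [← h2]
  simp only [List.length_ofFn]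
  exact hx (n + m)

end trees

section treeproj
variable {Λ : Type} [Fintype Λ] [Nonempty Λ] {Φ : Λ → Euc d → Euc d} {r : Λ → ℝ}
variable (hΦ : ∀ i, 0 < r i ∧ r i < 1 ∧ IsSimilarityWithRatio (Φ i) (r i))
include hΦ

theorem codeMap_extSeq (v : List Λ) (x : ℕ → Λ) :
    codeMap Φ (extSeq v x) = wordMap Φ v (codeMap Φ x) := by
  have hadd : Tendsto (fun n : ℕ => v.length + n) atTop atTop :=
    tendsto_atTop_mono (fun n => Nat.le_add_left n _) tendsto_id
  have h1 : Tendsto (fun n => seqA Φ (extSeq v x) (v.length + n)) atTop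
      (nhds (codeMap Φ (extSeq v x))) := (codeMap_tendsto hΦ _).comp hadd
  have h2 : ∀ n, seqA Φ (extSeq v x) (v.length + n) = wordMap Φ v (seqA Φ x n) := by
    intro n
    rw [seqA, seqA, ofFn_extSeq_add, wordMap_append]
  simp only [h2] at h1
  have hcont : Continuous (wordMap Φ v) :=
    sim_continuous (wordRatio_pos hΦ v).le (sim_wordMap (hΦsim hΦ) v)
  have h3 : Tendsto (fun n => wordMap Φ v (seqA Φ x n)) atTop
      (nhds (wordMap Φ v (codeMap Φ x))) :=
    (hcont.tendsto _).comp (codeMap_tendsto hΦ x)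
  exact tendsto_nhds_unique h1 h3

theorem treeProj_subset_ball (S : Set (List Λ)) :
    treeProj Φ S ⊆ closedBall 0 (Cmax Φ / (1 - rmax r)) := by
  rintro _ ⟨x, -, rfl⟩
  exact mem_closedBall.2 (codeMap_dist_zero hΦ x)

variable {T : Set (List Λ)} (hT : IsTree T)
include hT

theorem wordMap_image_treeProj_subset {v : List Λ} (hv : v ∈ T) :
    wordMap Φ v '' treeProj Φ (descTree T v) ⊆ treeProj Φ T := by
  rintro _ ⟨_, ⟨y, hy, rfl⟩, rfl⟩
  exact ⟨extSeq v y, extSeq_mem_boundary hT hv hy, codeMap_extSeq hΦ v y⟩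

theorem treeProj_decomp {p : Euc d} (hp : p ∈ treeProj Φ T) (n : ℕ) :
    ∃ w ∈ T, w.length = n ∧ p ∈ wordMap Φ w '' treeProj Φ (descTree T w) := by
  obtain ⟨x, hx, rfl⟩ := hp
  refine ⟨List.ofFn fun i : Fin n => x i, hx n, List.length_ofFn, ?_⟩
  refine ⟨codeMap Φ (fun k => x (n + k)), ⟨_, shift_mem_boundary hT hx n, rfl⟩, ?_⟩
  rw [← codeMap_extSeq hΦ, extSeq_shift]

end treeproj

section branch
variable {Λ : Type}

def branchW (T : Set (List Λ)) (h0 : [] ∈ T) (hnl : ∀ w ∈ T, ∃ a : Λ, w ++ [a] ∈ T) :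
    ℕ → {l : List Λ // l ∈ T}
  | 0 => ⟨[], h0⟩
  | n+1 => ⟨(branchW T h0 hnl n).1 ++ [(hnl _ (branchW T h0 hnl n).2).choose],
      (hnl _ (branchW T h0 hnl n).2).choose_spec⟩

def branchX (T : Set (List Λ)) (h0 : [] ∈ T) (hnl : ∀ w ∈ T, ∃ a : Λ, w ++ [a] ∈ T) :
    ℕ → Λ := fun n => (hnl _ (branchW T h0 hnl n).2).choose

theorem ofFn_branchX (T : Set (List Λ)) (h0 : [] ∈ T) (hnl : ∀ w ∈ T, ∃ a : Λ, w ++ [a] ∈ T)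
    (n : ℕ) : (List.ofFn fun i : Fin n => branchX T h0 hnl i) = (branchW T h0 hnl n).1 := by
  induction n with
  | zero => simp [branchW]
  | succ n ih => rw [ofFn_concat, ih]; rfl

theorem branchX_mem_boundary (T : Set (List Λ)) (h0 : [] ∈ T)
    (hnl : ∀ w ∈ T, ∃ a : Λ, w ++ [a] ∈ T) : branchX T h0 hnl ∈ treeBoundary T := by
  intro n
  rw [ofFn_branchX]
  exact (branchW T h0 hnl n).2

theorem descTree_isTree {T : Set (List Λ)} (hT : IsTree T) {v : List Λ} (hv : v ∈ T) :
    IsTree (descTree T v) := by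
  constructor
  · show v ++ [] ∈ T
    simpa using hv
  · intro w hw u hu
    obtain ⟨t, rfl⟩ := hu
    exact hT.2 _ hw _ ⟨t, by rw [List.append_assoc]⟩

theorem descTree_noLeaves {T : Set (List Λ)} (hnl : HasNoLeaves T) (v : List Λ) :
    ∀ w ∈ descTree T v, ∃ a : Λ, w ++ [a] ∈ descTree T v := by
  intro w hw
  obtain ⟨a, ha⟩ := hnl (v ++ w) hw
  exact ⟨a, by show v ++ (w ++ [a]) ∈ T; rwa [← List.append_assoc]⟩

theorem treeProj_nonempty' {Φ : Λ → Euc d → Euc d} {T : Set (List Λ)} (h0 : [] ∈ T)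
    (hnl : ∀ w ∈ T, ∃ a : Λ, w ++ [a] ∈ T) : (treeProj Φ T).Nonempty :=
  ⟨codeMap Φ (branchX T h0 hnl), Set.mem_image_of_mem _ (branchX_mem_boundary T h0 hnl)⟩

theorem treeProj_desc_nonempty {Φ : Λ → Euc d → Euc d} {T : Set (List Λ)} (hT : IsTree T)
    (hnl : HasNoLeaves T) {v : List Λ} (hv : v ∈ T) : (treeProj Φ (descTree T v)).Nonempty :=
  treeProj_nonempty' (descTree_isTree hT hv).1 (descTree_noLeaves hnl v)

end branch

section cube
variable {d : ℕ}

def cubeCenter (d : ℕ) : Euc d := WithLp.toLp 2 fun _ => (1/2 : ℝ)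

theorem cubeCenter_apply (i : Fin d) : cubeCenter d i = 1/2 := rfl

theorem cubeCenter_mem : cubeCenter d ∈ unitCube d := fun i => by
  rw [cubeCenter_apply]; constructor <;> norm_num

theorem coord_dist_le (x y : Euc d) (i : Fin d) : dist (x i) (y i) ≤ dist x y := by
  rw [EuclideanSpace.dist_eq]
  have h1 : dist (x i) (y i) ^ 2 ≤ ∑ j, dist (x j) (y j) ^ 2 :=
    Finset.single_le_sum (f := fun j => dist (x j) (y j) ^ 2) (fun j _ => sq_nonneg _)
      (Finset.mem_univ i)
  calc dist (x i) (y i) = Real.sqrt (dist (x i) (y i) ^ 2) := (Real.sqrt_sq dist_nonneg).symm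
    _ ≤ _ := Real.sqrt_le_sqrt h1

theorem dist_cubeCenter_le {x : Euc d} (hx : x ∈ unitCube d) :
    dist x (cubeCenter d) ≤ Real.sqrt d := by
  rw [EuclideanSpace.dist_eq]
  apply Real.sqrt_le_sqrt
  calc (∑ j, dist (x j) (cubeCenter d j) ^ 2) ≤ ∑ _j : Fin d, (1:ℝ) := by
        apply Finset.sum_le_sum
        intro j _
        have h1 := (hx j).1
        have h2 := (hx j).2
        rw [Real.dist_eq, cubeCenter_apply]
        have : |x j - 1/2| ≤ 1/2 := by rw [abs_le]; constructor <;> linarith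
        nlinarith [abs_nonneg (x j - 1/2)]
    _ = (d : ℝ) := by simp

theorem dist_zero_le {x : Euc d} (hx : x ∈ unitCube d) : dist x 0 ≤ Real.sqrt d := by
  rw [EuclideanSpace.dist_eq]
  apply Real.sqrt_le_sqrt
  calc (∑ j, dist (x j) ((0 : Euc d) j) ^ 2) ≤ ∑ _j : Fin d, (1:ℝ) := by
        apply Finset.sum_le_sum
        intro j _
        have h1 := (hx j).1
        have h2 := (hx j).2
        have h0 : (0 : Euc d) j = 0 := rfl
        rw [Real.dist_eq, h0]
        have : |x j - 0| ≤ 1 := by rw [abs_le]; constructor <;> linarith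
        nlinarith [abs_nonneg (x j - 0)]
    _ = (d : ℝ) := by simp

theorem unitCube_isClosed : IsClosed (unitCube d) := by
  have : unitCube d = ⋂ i, (fun x : Euc d => x i) ⁻¹' (Set.Icc 0 1) := by
    ext x; simp [unitCube]
  rw [this]
  exact isClosed_iInter fun i =>
    IsClosed.preimage (EuclideanSpace.proj (𝕜 := ℝ) i).continuous isClosed_Icc

theorem unitCube_isCompact : IsCompact (unitCube d) := by
  apply IsCompact.of_isClosed_subset (isCompact_closedBall (0 : Euc d) (Real.sqrt d))
    unitCube_isClosed
  intro x hx
  exact mem_closedBall.2 (dist_zero_le hx)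

def shrinkMap (d : ℕ) (δ : ℝ) : Euc d → Euc d :=
  fun x => cubeCenter d + (1 - δ) • (x - cubeCenter d)

def shrinkInv (d : ℕ) (δ : ℝ) : Euc d → Euc d :=
  fun x => cubeCenter d + (1 - δ)⁻¹ • (x - cubeCenter d)

theorem shrinkMap_sim {δ : ℝ} (hδ : δ ≤ 1) : IsSimilarityWithRatio (shrinkMap d δ) (1 - δ) := by
  intro x y
  simp only [shrinkMap, dist_eq_norm]
  rw [show cubeCenter d + (1 - δ) • (x - cubeCenter d) -
      (cubeCenter d + (1 - δ) • (y - cubeCenter d)) = (1 - δ) • (x - y) by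
    module]
  rw [norm_smul, Real.norm_of_nonneg (by linarith)]

theorem shrinkMap_shrinkInv {δ : ℝ} (hδ : δ ≠ 1) (x : Euc d) :
    shrinkMap d δ (shrinkInv d δ x) = x := by
  simp only [shrinkMap, shrinkInv]
  rw [show cubeCenter d + (1 - δ)⁻¹ • (x - cubeCenter d) - cubeCenter d
      = (1 - δ)⁻¹ • (x - cubeCenter d) by abel]
  rw [smul_smul, mul_inv_cancel₀ (by intro h; exact hδ (by linarith [sub_eq_zero.mp h]))]
  simp

theorem dist_shrinkMap (δ : ℝ) (hδ : 0 ≤ δ) (x : Euc d) :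
    dist (shrinkMap d δ x) x = δ * dist x (cubeCenter d) := by
  simp only [shrinkMap, dist_eq_norm]
  have h : cubeCenter d + (1 - δ) • (x - cubeCenter d) - x = (-δ) • (x - cubeCenter d) := by
    module
  rw [h, norm_smul, norm_neg, Real.norm_of_nonneg hδ]

theorem shrinkMap_apply_coord (δ : ℝ) (x : Euc d) (i : Fin d) :
    shrinkMap d δ x i = 1/2 + (1 - δ) * (x i - 1/2) := by
  rw [shrinkMap]
  simp only [PiLp.add_apply, PiLp.smul_apply, PiLp.sub_apply, cubeCenter_apply, smul_eq_mul]

theorem shrinkMap_mem_cube {t δ : ℝ} (ht : 0 ≤ t) (hδ : δ = 2*t/(1+2*t)) {q m : Euc d}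
    (hm : m ∈ unitCube d) (hq : dist q m ≤ t) : shrinkMap d δ q ∈ unitCube d := by
  intro i
  rw [shrinkMap_apply_coord]
  have h1 : |q i - m i| ≤ t := by
    rw [← Real.dist_eq]
    exact (coord_dist_le q m i).trans hq
  have h2 : |m i - 1/2| ≤ 1/2 := by
    have := (hm i).1; have := (hm i).2
    rw [abs_le]; constructor <;> linarith
  have h3 : |q i - 1/2| ≤ t + 1/2 := by
    calc |q i - 1/2| = |(q i - m i) + (m i - 1/2)| := by ring_nf
      _ ≤ |q i - m i| + |m i - 1/2| := abs_add_le _ _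
      _ ≤ t + 1/2 := add_le_add h1 h2
  have hd : (0:ℝ) < 1 + 2*t := by linarith
  have h4 : 1 - δ = 1/(1+2*t) := by rw [hδ]; field_simp; ring
  have h5 : |(1 - δ) * (q i - 1/2)| ≤ 1/2 := by
    rw [abs_mul, h4, abs_of_pos (by positivity)]
    rw [div_mul_eq_mul_div, div_le_iff₀ hd]
    calc 1 * |q i - 1/2| ≤ t + 1/2 := by rwa [one_mul]
      _ ≤ 1/2 * (1 + 2*t) := by linarith
  rw [abs_le] at h5
  constructor <;> [linarith [h5.1]; linarith [h5.2]]

theorem shrinkInv_shrinkMap {δ : ℝ} (hδ : δ ≠ 1) (x : Euc d) :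
    shrinkInv d δ (shrinkMap d δ x) = x := by
  simp only [shrinkMap, shrinkInv]
  rw [show cubeCenter d + (1 - δ) • (x - cubeCenter d) - cubeCenter d
      = (1 - δ) • (x - cubeCenter d) by abel]
  rw [smul_smul, inv_mul_cancel₀ (by intro h; exact hδ (by linarith [sub_eq_zero.mp h]))]
  simp

theorem dist_shrinkInv {δ : ℝ} (hδ0 : 0 ≤ δ) (hδ1 : δ < 1) (x : Euc d) :
    dist (shrinkInv d δ x) x = (δ / (1 - δ)) * dist x (cubeCenter d) := by
  have h1 : (0:ℝ) < 1 - δ := by linarith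
  simp only [shrinkInv, dist_eq_norm]
  have h2 : cubeCenter d + (1 - δ)⁻¹ • (x - cubeCenter d) - x
      = (δ/(1-δ)) • (x - cubeCenter d) := by
    rw [show (δ/(1-δ) : ℝ) = (1-δ)⁻¹ - 1 by field_simp; ring]
    module
  rw [h2, norm_smul, Real.norm_of_nonneg (by positivity)]

end cube

section osc
variable {Λ : Type} [Fintype Λ] [Nonempty Λ] {Φ : Λ → Euc d → Euc d} {r : Λ → ℝ}
variable {U : Set (Euc d)}
variable (hΦ : ∀ i, 0 < r i ∧ r i < 1 ∧ IsSimilarityWithRatio (Φ i) (r i))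
variable (hU : IsOSCSet Φ U)
include hΦ hU

theorem phi_image_open (i : Λ) {V : Set (Euc d)} (hV : IsOpen V) : IsOpen (Φ i '' V) := by
  have hi := (hΦ i).2.2
  have hinj := sim_injective (hΦ i).1 hi
  have hsurj := sim_surjective (hΦ i).1 hi
  have himg : Φ i '' V = Function.invFun (Φ i) ⁻¹' V := by
    ext x
    constructor
    · rintro ⟨u, hu, rfl⟩
      rwa [Set.mem_preimage, sim_left_inv (hΦ i).1 hi]
    · intro hx
      exact ⟨_, hx, sim_right_inv (hΦ i).1 hi x⟩
  rw [himg]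
  exact hV.preimage (sim_continuous (inv_nonneg.mpr (hΦ i).1.le) (sim_invFun (hΦ i).1 hi))

theorem wordMap_mem_U {w : List Λ} {z : Euc d} (hz : z ∈ U) : wordMap Φ w z ∈ U := by
  induction w with
  | nil => exact hz
  | cons a w ih => rw [wordMap_cons]; exact hU.2.2.1 a ⟨_, ih, rfl⟩

theorem wordMap_closure_subset (w : List Λ) :
    wordMap Φ w '' closure U ⊆ closure U := by
  induction w with
  | nil => intro x hx; simpa [wordMap_nil] using hx
  | cons a w ih =>
      intro x hx
      obtain ⟨z, hz, rfl⟩ := hx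
      rw [wordMap_cons]
      have h1 : wordMap Φ w z ∈ closure U := ih ⟨z, hz, rfl⟩
      have hcont : Continuous (Φ a) := sim_continuous (hΦ a).1.le (hΦ a).2.2
      have h2 : Φ a '' closure U ⊆ closure (Φ a '' U) := image_closure_subset_closure_image hcont
      have h3 : closure (Φ a '' U) ⊆ closure U := closure_mono (hU.2.2.1 a)
      exact h3 (h2 ⟨_, h1, rfl⟩)

theorem codeMap_mem_closureU (x : ℕ → Λ) : codeMap Φ x ∈ closure U := by
  obtain ⟨z, hz⟩ := hU.1
  set s : ℕ → Euc d := fun n => wordMap Φ (List.ofFn fun i : Fin n => x i) z with hs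
  have hmem : ∀ n, s n ∈ U := fun n => wordMap_mem_U hΦ hU hz
  have htend : Tendsto s atTop (nhds (codeMap Φ x)) := by
    rw [tendsto_iff_dist_tendsto_zero]
    have hb : ∀ n, dist (s n) (codeMap Φ x) ≤ rmax r ^ n * dist z 0 + dist (seqA Φ x n) (codeMap Φ x) := by
      intro n
      calc dist (s n) (codeMap Φ x) ≤ dist (s n) (seqA Φ x n) + dist (seqA Φ x n) (codeMap Φ x) :=
            dist_triangle _ _ _
        _ ≤ rmax r ^ n * dist z 0 + dist (seqA Φ x n) (codeMap Φ x) := by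
            apply add_le_add_left
            rw [hs]
            show dist (wordMap Φ _ z) (wordMap Φ _ 0) ≤ _
            rw [sim_wordMap (hΦsim hΦ) _ _ _]
            apply mul_le_mul_of_nonneg_right _ dist_nonneg
            have := wordRatio_le_pow hΦ (List.ofFn fun i : Fin n => x i)
            rwa [List.length_ofFn] at this
    have h0 : Tendsto (fun n => rmax r ^ n * dist z 0 + dist (seqA Φ x n) (codeMap Φ x))
        atTop (nhds 0) := by
      have t1 : Tendsto (fun n : ℕ => rmax r ^ n * dist z 0) atTop (nhds 0) := by
        rw [show (0:ℝ) = 0 * dist z 0 by ring]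
        exact (tendsto_pow_atTop_nhds_zero_of_lt_one (rmax_pos hΦ).le
          (rmax_lt_one hΦ)).mul_const _
      have t2 : Tendsto (fun n => dist (seqA Φ x n) (codeMap Φ x)) atTop (nhds 0) := by
        rw [← tendsto_iff_dist_tendsto_zero]
        exact codeMap_tendsto hΦ x
      simpa using t1.add t2
    exact squeeze_zero (fun n => dist_nonneg) hb h0
  exact mem_closure_of_tendsto htend (Eventually.of_forall hmem)

theorem osc_disjoint : ∀ (v w : List Λ), v.length = w.length → v ≠ w →
    (wordMap Φ v '' U) ∩ (wordMap Φ w '' closure U) = ∅ := by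
  intro v
  induction v with
  | nil =>
      intro w hlen hne
      cases w with
      | nil => exact absurd rfl hne
      | cons b w => simp at hlen
  | cons a v ih =>
      intro w hlen hne
      cases w with
      | nil => simp at hlen
      | cons b w' =>
          simp only [List.length_cons, Nat.succ_inj] at hlen
          by_cases hab : a = b
          · subst hab
            have hne' : v ≠ w' := fun h => hne (by rw [h])
            have hinj := sim_injective (hΦ a).1 (hΦ a).2.2
            have h1 : wordMap Φ (a :: v) '' U = Φ a '' (wordMap Φ v '' U) := by
              rw [← Set.image_comp]; rfl
            have h2 : wordMap Φ (a :: w') '' closure U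
                = Φ a '' (wordMap Φ w' '' closure U) := by
              rw [← Set.image_comp]; rfl
            rw [h1, h2, ← Set.image_inter hinj, ih w' hlen hne']
            simp
          · apply Set.eq_empty_of_subset_empty
            intro x hx
            obtain ⟨hx1, hx2⟩ := hx
            have hx1' : x ∈ Φ a '' U := by
              obtain ⟨u, hu, rfl⟩ := hx1
              rw [wordMap_cons]
              exact ⟨_, wordMap_mem_U hΦ hU hu, rfl⟩
            have hx2' : x ∈ closure (Φ b '' U) := by
              obtain ⟨u, hu, rfl⟩ := hx2
              rw [wordMap_cons]
              have hcont : Continuous (Φ b) := sim_continuous (hΦ b).1.le (hΦ b).2.2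
              apply image_closure_subset_closure_image hcont
              exact ⟨_, wordMap_closure_subset hΦ hU w' ⟨u, hu, rfl⟩, rfl⟩
            have hopen : IsOpen (Φ a '' U) := phi_image_open hΦ hU a hU.2.1
            have hdisj : (Φ a '' U) ∩ (Φ b '' U) = ∅ := hU.2.2.2 a b hab
            have : closure (Φ b '' U) ⊆ (Φ a '' U)ᶜ := by
              apply closure_minimal _ hopen.isClosed_compl
              intro y hy hy'
              exact absurd (Set.mem_inter hy' hy) (by rw [hdisj]; exact id)
            exact this hx2' hx1'

theorem osc_key {T : Set (List Λ)} (hT : IsTree T) {v : List Λ} (hv : v ∈ T) :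
    treeProj Φ T ∩ (wordMap Φ v '' U) ⊆ wordMap Φ v '' treeProj Φ (descTree T v) := by
  rintro p ⟨hp, hpU⟩
  obtain ⟨w, hw, hwlen, hpw⟩ := treeProj_decomp hΦ hT hp v.length
  by_cases hvw : w = v
  · subst hvw; exact hpw
  · exfalso
    have h1 : p ∈ wordMap Φ w '' closure U := by
      obtain ⟨q, hq, rfl⟩ := hpw
      obtain ⟨y, hy, rfl⟩ := hq
      exact ⟨_, codeMap_mem_closureU hΦ hU y, rfl⟩
    have := osc_disjoint hΦ hU v w hwlen.symm (fun h => hvw h.symm)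
    exact absurd (Set.mem_inter hpU h1) (by rw [this]; exact id)

end osc

section haus
variable {d : ℕ}

theorem pick_close {s t : Set (Euc d)} (hs : s.Nonempty) (ht : t.Nonempty)
    (hbs : Bornology.IsBounded s) (hbt : Bornology.IsBounded t) {x : Euc d} (hx : x ∈ s)
    {b : ℝ} (hb : hausdorffDist s t < b) : ∃ y ∈ t, dist x y < b :=
  exists_dist_lt_of_hausdorffDist_lt hx hb
    (hausdorffEdist_ne_top_of_nonempty_of_bounded hs ht hbs hbt)

theorem absorb {SA : Set (Euc d)} (hSA : IsCompact SA) (hMne : (unitCube d ∩ SA).Nonempty) :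
    ∀ ε > 0, ∃ τ > 0, ∀ x ∈ unitCube d, infDist x SA ≤ τ →
      infDist x (unitCube d ∩ SA) ≤ ε := by
  intro ε hε
  by_contra hcon
  push_neg at hcon
  have hchoice : ∀ k : ℕ, ∃ x, x ∈ unitCube d ∧ infDist x SA ≤ 1/(k+1) ∧
      ε < infDist x (unitCube d ∩ SA) := by
    intro k
    obtain ⟨x, hx1, hx2, hx3⟩ := hcon (1/(k+1)) (by positivity)
    exact ⟨x, hx1, hx2, hx3⟩
  choose x hx1 hx2 hx3 using hchoice
  obtain ⟨p, hpQ, φ, hφ, hconv⟩ := unitCube_isCompact.tendsto_subseq hx1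
  have hSAne : SA.Nonempty := ⟨hMne.choose, hMne.choose_spec.2⟩
  have hlim1 : Tendsto (fun k => infDist (x (φ k)) SA) atTop (nhds (infDist p SA)) :=
    ((continuous_infDist_pt SA).tendsto p).comp hconv
  have hub : Tendsto (fun k : ℕ => 1/((φ k : ℝ)+1)) atTop (nhds 0) := by
    apply squeeze_zero (fun k => by positivity) (g := fun k : ℕ => 1/((k:ℝ)+1))
    · intro k
      have hcast : (k:ℝ)+1 ≤ (φ k:ℝ)+1 := by exact_mod_cast Nat.succ_le_succ hφ.le_apply
      exact one_div_le_one_div_of_le (by positivity) hcast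
    · exact tendsto_one_div_add_atTop_nhds_zero_nat
  have h0 : infDist p SA ≤ 0 :=
    le_of_tendsto_of_tendsto' hlim1 hub (fun k => hx2 (φ k))
  have hpSA : p ∈ SA := by
    rw [hSA.isClosed.mem_iff_infDist_zero hSAne]
    exact le_antisymm h0 infDist_nonneg
  have hpM : p ∈ unitCube d ∩ SA := ⟨hpQ, hpSA⟩
  have hlim2 : Tendsto (fun k => infDist (x (φ k)) (unitCube d ∩ SA)) atTop
      (nhds (infDist p (unitCube d ∩ SA))) :=
    ((continuous_infDist_pt _).tendsto p).comp hconv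
  have hge : ε ≤ infDist p (unitCube d ∩ SA) :=
    le_of_tendsto_of_tendsto' tendsto_const_nhds hlim2 (fun k => (hx3 (φ k)).le)
  rw [infDist_zero_of_mem hpM] at hge
  linarith

theorem hdist_image_val {Q : Set (Euc d)} {s t : Set ↥Q} :
    hausdorffDist ((Subtype.val '' s : Set (Euc d))) (Subtype.val '' t) = hausdorffDist s t := by
  simp [hausdorffDist, EMetric.hausdorffEdist_image isometry_subtype_coe]

theorem blaschke {N : ℕ → Set (Euc d)} (hcomp : ∀ n, IsCompact (N n)) (hne : ∀ n, (N n).Nonempty)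
    (hsub : ∀ n, N n ⊆ unitCube d) :
    ∃ (L : Set (Euc d)) (φ : ℕ → ℕ), IsCompact L ∧ L.Nonempty ∧ StrictMono φ ∧
      Tendsto (fun k => hausdorffDist (N (φ k)) L) atTop (nhds 0) := by
  haveI : CompactSpace ↥(unitCube d) := isCompact_iff_compactSpace.mp unitCube_isCompact
  set S : ℕ → TopologicalSpace.NonemptyCompacts ↥(unitCube d) := fun n =>
    ⟨⟨Subtype.val ⁻¹' N n, ((hcomp n).isClosed.preimage continuous_subtype_val).isCompact⟩,
      ⟨⟨(hne n).choose, hsub n (hne n).choose_spec⟩, (hne n).choose_spec⟩⟩ with hS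
  obtain ⟨L', -, φ, hφ, hconv⟩ := isCompact_univ.tendsto_subseq (x := S) (fun n => Set.mem_univ _)
  refine ⟨Subtype.val '' (L' : Set ↥(unitCube d)), φ, ?_, ?_, hφ, ?_⟩
  · exact L'.toCompacts.isCompact.image continuous_subtype_val
  · exact L'.nonempty.image _
  · have hdist : Tendsto (fun k => dist (S (φ k)) L') atTop (nhds 0) := by
      rw [← tendsto_iff_dist_tendsto_zero]
      exact hconv
    have heq : ∀ k, hausdorffDist (N (φ k)) (Subtype.val '' (L' : Set ↥(unitCube d)))
        = dist (S (φ k)) L' := by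
      intro k
      rw [Metric.NonemptyCompacts.dist_eq, ← hdist_image_val]
      congr 1
      show N (φ k) = Subtype.val '' (Subtype.val ⁻¹' N (φ k))
      rw [Set.image_preimage_eq_inter_range, Subtype.range_coe]
      exact (Set.inter_eq_self_of_subset_left (hsub (φ k))).symm
    simpa only [heq] using hdist

end haus

section core
variable {Λ : Type} [Fintype Λ] [Nonempty Λ] {Φ : Λ → Euc d → Euc d} {r : Λ → ℝ}

theorem core_construction
    (hΦ : ∀ i, 0 < r i ∧ r i < 1 ∧ IsSimilarityWithRatio (Φ i) (r i))
    {F : Set (Euc d)} (hFc : IsCompact F) (hFne : F.Nonempty)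
    {T : Set (List Λ)} (hT : IsTree T) (hTnl : HasNoLeaves T)
    (hFT : F = treeProj Φ T)
    {A : Set (Euc d)} (hAc : IsCompact A) (hAne : A.Nonempty)
    {v : ℕ → List Λ} (hv : ∀ n, v n ∈ T)
    (htend : Tendsto (fun n => hausdorffDist (treeProj Φ (descTree T (v n))) A) atTop (nhds 0))
    (hAF : A ≠ F)
    {ψ : Euc d → Euc d} {s : ℝ} (hs : 1 ≤ s) (hψ : IsSimilarityWithRatio ψ s)
    (hMne : (unitCube d ∩ ψ '' A).Nonempty) :
    ∃ (N₀ : ℕ) (ψ' : ℕ → Euc d → Euc d) (η : ℕ → ℝ),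
      Tendsto η atTop (nhds 0) ∧ (∀ n, 0 ≤ η n) ∧
      (∀ n, N₀ ≤ n → IsMiniset F (unitCube d ∩ ψ' n '' F)) ∧
      (∀ n, N₀ ≤ n → ∀ m' ∈ unitCube d ∩ ψ '' A,
        ∃ p ∈ unitCube d ∩ ψ' n '' F, dist p m' ≤ η n) ∧
      (∀ U : Set (Euc d), IsOSCSet Φ U → ψ ⁻¹' unitCube d ⊆ U →
        ∃ N₁, N₀ ≤ N₁ ∧ ∀ n, N₁ ≤ n → ∀ x ∈ unitCube d ∩ ψ' n '' F,
          infDist x (ψ '' A) ≤ η n) := by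
  have hs0 : (0:ℝ) < s := lt_of_lt_of_le one_pos hs
  set Γ : ℕ → Set (Euc d) := fun n => treeProj Φ (descTree T (v n)) with hΓdef
  have hΓne : ∀ n, (Γ n).Nonempty := fun n => treeProj_desc_nonempty hT hTnl (hv n)
  have hΓbd : ∀ n, Bornology.IsBounded (Γ n) := fun n =>
    (Metric.isBounded_closedBall).subset (treeProj_subset_ball hΦ _)
  have hAbd : Bornology.IsBounded A := hAc.isBounded
  set e : ℕ → ℝ := fun n => hausdorffDist (Γ n) A with hedef
  have he' : ∀ n, e n = hausdorffDist (Γ n) A := fun _ => rfl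
  have he0 : ∀ n, 0 ≤ e n := fun n => hausdorffDist_nonneg
  have hiv : ∀ n : ℕ, (0:ℝ) < ((n:ℝ)+1)⁻¹ := fun n => by positivity
  set t : ℕ → ℝ := fun n => s * (e n + ((n:ℝ)+1)⁻¹) with htdef
  have ht' : ∀ n, t n = s * (e n + ((n:ℝ)+1)⁻¹) := fun _ => rfl
  have ht0 : ∀ n, 0 < t n := fun n => by
    rw [ht']
    have h1 := hiv n; have h2 := he0 n
    positivity
  have htt : Tendsto t atTop (nhds 0) := by
    have h1 : Tendsto (fun n : ℕ => ((n:ℝ)+1)⁻¹) atTop (nhds 0) := by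
      simpa [one_div] using tendsto_one_div_add_atTop_nhds_zero_nat (𝕜 := ℝ)
    have h2 : Tendsto (fun n => s * (e n + ((n:ℝ)+1)⁻¹)) atTop (nhds (s * (0 + 0))) :=
      (htend.add h1).const_mul s
    rw [show s * (0+0) = 0 by ring] at h2
    exact h2
  set δ : ℕ → ℝ := fun n => 2 * t n / (1 + 2 * t n) with hδdef
  have hδ' : ∀ n, δ n = 2 * t n / (1 + 2 * t n) := fun _ => rfl
  have hδ0 : ∀ n, 0 ≤ δ n := fun n => by
    rw [hδ']
    have h1 := (ht0 n).le
    exact div_nonneg (by linarith) (by linarith)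
  have hδ1 : ∀ n, δ n < 1 := fun n => by
    have h1 := ht0 n
    rw [hδ', div_lt_one (by linarith)]
    linarith
  have hδt : Tendsto δ atTop (nhds 0) := by
    have h2 : Tendsto (fun n => 2 * t n) atTop (nhds (2 * 0)) := htt.const_mul 2
    rw [mul_zero] at h2
    have h3 : Tendsto (fun n => 1 + 2 * t n) atTop (nhds (1 + 0)) := h2.const_add 1
    rw [add_zero] at h3
    have h4 := h2.div h3 one_ne_zero
    rw [zero_div] at h4
    exact h4
  have hδq : Tendsto (fun n => δ n / (1 - δ n)) atTop (nhds 0) := by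
    have h3 : Tendsto (fun n => 1 - δ n) atTop (nhds (1 - 0)) := hδt.const_sub 1
    rw [sub_zero] at h3
    have h4 := hδt.div h3 one_ne_zero
    rw [zero_div] at h4
    exact h4
  set η : ℕ → ℝ := fun n => (δ n / (1 - δ n)) * Real.sqrt d + δ n * (t n + Real.sqrt d) + t n
    with hηdef
  have hη' : ∀ n, η n = (δ n / (1 - δ n)) * Real.sqrt d + δ n * (t n + Real.sqrt d) + t n :=
    fun _ => rfl
  have hsd : (0:ℝ) ≤ Real.sqrt d := Real.sqrt_nonneg _
  have hη0 : ∀ n, 0 ≤ η n := fun n => by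
    have h1 := hδ0 n; have h2 := hδ1 n; have h3 := (ht0 n).le
    have h5 : (0:ℝ) < 1 - δ n := by linarith
    have h6 := mul_nonneg (div_nonneg h1 h5.le) hsd
    have h7 := mul_nonneg h1 (add_nonneg h3 hsd)
    rw [hη']
    linarith
  have hηt : Tendsto η atTop (nhds 0) := by
    have h1 : Tendsto (fun n => (δ n / (1 - δ n)) * Real.sqrt d) atTop (nhds (0 * Real.sqrt d)) :=
      hδq.mul_const _
    rw [zero_mul] at h1
    have h2 : Tendsto (fun n => t n + Real.sqrt d) atTop (nhds (0 + Real.sqrt d)) :=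
      htt.add_const _
    have h3 : Tendsto (fun n => δ n * (t n + Real.sqrt d)) atTop
        (nhds (0 * (0 + Real.sqrt d))) := hδt.mul h2
    rw [zero_mul] at h3
    have h4 : Tendsto η atTop (nhds (0 + 0 + 0)) := (h1.add h3).add htt
    rw [add_zero, add_zero] at h4
    exact h4
  -- eventually v n ≠ []
  have hvne : ∃ N, ∀ n, N ≤ n → v n ≠ [] := by
    by_contra hcon
    push_neg at hcon
    have hFA : F = A := by
      have hfin : EMetric.hausdorffEdist F A ≠ ⊤ :=
        hausdorffEdist_ne_top_of_nonempty_of_bounded hFne hAne hFc.isBounded hAbd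
      rw [← IsClosed.hausdorffDist_zero_iff_eq hFc.isClosed hAc.isClosed hfin]
      have hd0 : ∀ ε > 0, hausdorffDist F A < ε := by
        intro ε hε
        obtain ⟨N, hN⟩ := eventually_atTop.mp (htend.eventually (gt_mem_nhds hε))
        obtain ⟨n, hnN, hvn⟩ := hcon N
        have hΓF : Γ n = F := by
          show treeProj Φ (descTree T (v n)) = F
          have hdT : descTree T ([] : List Λ) = T := by ext w; simp [descTree]
          rw [hvn, hdT, hFT]
        have h5 := hN n hnN
        rw [he', hΓF] at h5
        exact h5
      by_contra hne0
      have hpos : 0 < hausdorffDist F A :=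
        lt_of_le_of_ne hausdorffDist_nonneg (Ne.symm hne0)
      exact absurd (hd0 _ hpos) (lt_irrefl _)
    exact hAF hFA.symm
  obtain ⟨N₁, hN₁⟩ := hvne
  have hrm1 : (0:ℝ) < 1 - rmax r := by linarith [rmax_lt_one hΦ]
  obtain ⟨N₂, hN₂⟩ := eventually_atTop.mp (hδt.eventually (gt_mem_nhds hrm1))
  set N₀ := max N₁ N₂ with hN₀
  set winv : ℕ → Euc d → Euc d := fun n => Function.invFun (wordMap Φ (v n)) with hwinvdef
  set ψ' : ℕ → Euc d → Euc d := fun n => shrinkMap d (δ n) ∘ ψ ∘ winv n with hψ'def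
  have hψ'' : ∀ n y, ψ' n y = shrinkMap d (δ n) (ψ (winv n y)) := fun _ _ => rfl
  have hwsim : ∀ n, IsSimilarityWithRatio (wordMap Φ (v n)) (wordRatio r (v n)) :=
    fun n => sim_wordMap (hΦsim hΦ) (v n)
  have hwpos : ∀ n, 0 < wordRatio r (v n) := fun n => wordRatio_pos hΦ (v n)
  have hwinvsim : ∀ n, IsSimilarityWithRatio (winv n) (wordRatio r (v n))⁻¹ :=
    fun n => sim_invFun (hwpos n) (hwsim n)
  set ρ : ℕ → ℝ := fun n => (1 - δ n) * (s * (wordRatio r (v n))⁻¹) with hρdef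
  have hψ'sim : ∀ n, IsSimilarityWithRatio (ψ' n) (ρ n) := fun n =>
    sim_comp (shrinkMap_sim (hδ1 n).le) (sim_comp hψ (hwinvsim n))
  have hρ1 : ∀ n, N₀ ≤ n → 1 ≤ ρ n := by
    intro n hn
    have h1 : wordRatio r (v n) ≤ rmax r :=
      wordRatio_le_rmax hΦ (hN₁ n (le_trans (le_max_left _ _) hn))
    have h2 : δ n < 1 - rmax r := hN₂ n (le_trans (le_max_right _ _) hn)
    have h3 : wordRatio r (v n) ≤ 1 - δ n := by linarith
    have h4 : (0:ℝ) < (wordRatio r (v n))⁻¹ := inv_pos.mpr (hwpos n)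
    show (1:ℝ) ≤ (1 - δ n) * (s * (wordRatio r (v n))⁻¹)
    calc (1:ℝ) = wordRatio r (v n) * (wordRatio r (v n))⁻¹ :=
          (mul_inv_cancel₀ (hwpos n).ne').symm
      _ ≤ (1 - δ n) * (wordRatio r (v n))⁻¹ := mul_le_mul_of_nonneg_right h3 h4.le
      _ ≤ (1 - δ n) * (s * (wordRatio r (v n))⁻¹) := by
          have h5 : (wordRatio r (v n))⁻¹ ≤ s * (wordRatio r (v n))⁻¹ :=
            le_mul_of_one_le_left h4.le hs
          have h6 : (0:ℝ) ≤ 1 - δ n := by linarith [hδ1 n]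
          exact mul_le_mul_of_nonneg_left h5 h6
  -- the approximation property
  have happrox : ∀ n, N₀ ≤ n → ∀ m' ∈ unitCube d ∩ ψ '' A,
      ∃ p ∈ unitCube d ∩ ψ' n '' F, dist p m' ≤ η n := by
    intro n hn m' hm'
    obtain ⟨hm'Q, a', ha', rfl⟩ := hm'
    have hlt : hausdorffDist A (Γ n) < e n + ((n:ℝ)+1)⁻¹ := by
      have heq : hausdorffDist A (Γ n) = e n := by rw [he', hausdorffDist_comm]
      rw [heq]
      linarith [hiv n]
    obtain ⟨g, hg, hdist_ag⟩ := pick_close hAne (hΓne n) hAbd (hΓbd n) ha' hlt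
    have hqa : dist (ψ g) (ψ a') ≤ t n := by
      rw [hψ g a', ht' n]
      have hc : dist g a' = dist a' g := dist_comm g a'
      have := hdist_ag
      apply mul_le_mul_of_nonneg_left _ hs0.le
      rw [hc]
      linarith
    have hpQ : shrinkMap d (δ n) (ψ g) ∈ unitCube d :=
      shrinkMap_mem_cube (ht0 n).le (hδ' n) hm'Q hqa
    have hpF : shrinkMap d (δ n) (ψ g) ∈ ψ' n '' F := by
      refine ⟨wordMap Φ (v n) g, ?_, ?_⟩
      · rw [hFT]
        exact wordMap_image_treeProj_subset hΦ hT (hv n) ⟨g, hg, rfl⟩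
      · rw [hψ'']
        show shrinkMap d (δ n) (ψ (Function.invFun (wordMap Φ (v n)) (wordMap Φ (v n) g))) = _
        rw [sim_left_inv (hwpos n) (hwsim n) g]
    refine ⟨shrinkMap d (δ n) (ψ g), ⟨hpQ, hpF⟩, ?_⟩
    calc dist (shrinkMap d (δ n) (ψ g)) (ψ a')
        ≤ dist (shrinkMap d (δ n) (ψ g)) (ψ g) + dist (ψ g) (ψ a') := dist_triangle _ _ _
      _ ≤ δ n * dist (ψ g) (cubeCenter d) + t n := by
          apply add_le_add _ hqa
          rw [dist_shrinkMap (δ n) (hδ0 n)]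
      _ ≤ δ n * (t n + Real.sqrt d) + t n := by
          apply add_le_add_left
          apply mul_le_mul_of_nonneg_left _ (hδ0 n)
          calc dist (ψ g) (cubeCenter d)
              ≤ dist (ψ g) (ψ a') + dist (ψ a') (cubeCenter d) := dist_triangle _ _ _
            _ ≤ t n + Real.sqrt d := add_le_add hqa (dist_cubeCenter_le hm'Q)
      _ ≤ η n := by
          rw [hη']
          have h5 : (0:ℝ) < 1 - δ n := by linarith [hδ1 n]
          have h6 : 0 ≤ (δ n / (1 - δ n)) * Real.sqrt d :=
            mul_nonneg (div_nonneg (hδ0 n) h5.le) hsd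
          linarith
  refine ⟨N₀, ψ', η, hηt, hη0, ?_, happrox, ?_⟩
  · -- minisets
    intro n hn
    obtain ⟨m₀, hm₀⟩ := hMne
    obtain ⟨p, hp, -⟩ := happrox n hn m₀ hm₀
    exact ⟨⟨p, hp⟩, ψ' n, ⟨ρ n, hρ1 n hn, hψ'sim n⟩, rfl⟩
  · -- OSC part
    intro U hU hQU
    have hψinj : Function.Injective ψ := sim_injective hs0 hψ
    set K₀ : Set (Euc d) := Function.invFun ψ '' unitCube d with hK₀def
    have hK₀pre : K₀ = ψ ⁻¹' unitCube d := by
      ext x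
      constructor
      · rintro ⟨q, hq, rfl⟩
        show ψ (Function.invFun ψ q) ∈ unitCube d
        rwa [sim_right_inv hs0 hψ]
      · intro hx
        exact ⟨ψ x, hx, sim_left_inv hs0 hψ x⟩
    have hK₀c : IsCompact K₀ :=
      unitCube_isCompact.image (sim_continuous (inv_nonneg.mpr hs0.le) (sim_invFun hs0 hψ))
    have hK₀U : K₀ ⊆ U := by rw [hK₀pre]; exact hQU
    obtain ⟨ε, hε, hthick⟩ := hK₀c.exists_thickening_subset_open hU.2.1 hK₀U
    have hev : ∀ᶠ n in atTop, (δ n / (1 - δ n)) * Real.sqrt d < ε := by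
      have h1 : Tendsto (fun n => (δ n / (1 - δ n)) * Real.sqrt d) atTop
          (nhds (0 * Real.sqrt d)) := hδq.mul_const _
      rw [zero_mul] at h1
      exact h1.eventually (gt_mem_nhds hε)
    obtain ⟨N₃, hN₃⟩ := eventually_atTop.mp hev
    refine ⟨max N₀ N₃, le_max_left _ _, ?_⟩
    intro n hn x hx
    obtain ⟨hxQ, f, hf, hfx⟩ := hx
    have hnN₃ : N₃ ≤ n := le_trans (le_max_right _ _) hn
    have hzx : ψ (winv n f) = shrinkInv d (δ n) x := by
      rw [← hfx, hψ'', shrinkInv_shrinkMap (hδ1 n).ne]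
    have hdzx : dist (ψ (winv n f)) x ≤ (δ n / (1 - δ n)) * Real.sqrt d := by
      rw [hzx, dist_shrinkInv (hδ0 n) (hδ1 n)]
      apply mul_le_mul_of_nonneg_left (dist_cubeCenter_le hxQ)
      have h5 : (0:ℝ) < 1 - δ n := by linarith [hδ1 n]
      exact div_nonneg (hδ0 n) h5.le
    have hzU : winv n f ∈ U := by
      apply hthick
      rw [Metric.mem_thickening_iff]
      refine ⟨Function.invFun ψ x, ⟨x, hxQ, rfl⟩, ?_⟩
      have h1 : dist (winv n f) (Function.invFun ψ x) = s⁻¹ * dist (ψ (winv n f)) x := by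
        conv_lhs => rw [show winv n f = Function.invFun ψ (ψ (winv n f)) from
          (sim_left_inv hs0 hψ _).symm]
        exact sim_invFun hs0 hψ (ψ (winv n f)) x
      rw [h1]
      calc s⁻¹ * dist (ψ (winv n f)) x ≤ 1 * ((δ n / (1 - δ n)) * Real.sqrt d) := by
            apply mul_le_mul _ hdzx dist_nonneg zero_le_one
            rw [inv_le_one_iff₀]; right; exact hs
        _ = (δ n / (1 - δ n)) * Real.sqrt d := one_mul _
        _ < ε := hN₃ n hnN₃
    have hfw : f = wordMap Φ (v n) (winv n f) :=
      (sim_right_inv (hwpos n) (hwsim n) f).symm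
    have hfkey : f ∈ wordMap Φ (v n) '' (Γ n) := by
      apply osc_key hΦ hU hT (hv n)
      refine ⟨by rw [← hFT]; exact hf, ⟨winv n f, hzU, hfw.symm⟩⟩
    have hzΓ : winv n f ∈ Γ n := by
      obtain ⟨g, hg, hgf⟩ := hfkey
      have hzg : winv n f = g := by
        apply sim_injective (hwpos n) (hwsim n)
        rw [hgf]
        exact hfw.symm
      rwa [hzg]
    have hlt : hausdorffDist (Γ n) A < e n + ((n:ℝ)+1)⁻¹ := by
      rw [← he' n]
      linarith [hiv n]
    obtain ⟨a'', ha'', hdza⟩ := pick_close (hΓne n) hAne (hΓbd n) hAbd hzΓ hlt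
    have hxa : dist x (ψ a'') ≤ η n := by
      calc dist x (ψ a'')
          ≤ dist x (ψ (winv n f)) + dist (ψ (winv n f)) (ψ a'') := dist_triangle _ _ _
        _ ≤ (δ n / (1 - δ n)) * Real.sqrt d + t n := by
            apply add_le_add
            · rw [dist_comm]; exact hdzx
            · rw [hψ _ a'', ht' n]
              exact mul_le_mul_of_nonneg_left hdza.le hs0.le
        _ ≤ η n := by
            rw [hη']
            have h1 := mul_nonneg (hδ0 n) (add_nonneg (ht0 n).le hsd)
            linarith
    exact le_trans (infDist_le_dist_of_mem ⟨a'', ha'', rfl⟩) hxa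

end core

end Aux

theorem stmt2 {d : ℕ} {Λ : Type} [Fintype Λ] [Nonempty Λ]
    (Φ : Λ → Euc d → Euc d) (r : Λ → ℝ)
    (hΦ : ∀ i, IsContractingSimilarity (Φ i) (r i))
    (F : Set (Euc d)) (hFc : IsCompact F) (hFne : F.Nonempty)
    (T : Set (List Λ)) (hT : IsTree T) (hTnl : HasNoLeaves T)
    (hFT : F = treeProj Φ T) :
    (∀ A M : Set (Euc d), inClosureBranchSets Φ T A → IsMiniset A M →
      ∃ L : Set (Euc d), IsMicroset F L ∧ M ⊆ L) ∧
    (∀ (A : Set (Euc d)) (ψ : Euc d → Euc d) (U : Set (Euc d)),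
      inClosureBranchSets Φ T A → IsExpandingSimilarity ψ →
      (unitCube d ∩ ψ '' A).Nonempty → IsOSCSet Φ U → ψ ⁻¹' unitCube d ⊆ U →
      IsMicroset F (unitCube d ∩ ψ '' A)) := by
  have hΦ' : ∀ i, 0 < r i ∧ r i < 1 ∧ IsSimilarityWithRatio (Φ i) (r i) := fun i =>
    ⟨(hΦ i).1, (hΦ i).2.1, (hΦ i).2.2⟩
  have hminiMicro : ∀ M : Set (Euc d), IsMiniset F M → IsMicroset F M := by
    intro M hM
    obtain ⟨hMne, ψ, ⟨s, hs, hψs⟩, hMeq⟩ := hM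
    have hMc : IsCompact M := by
      rw [hMeq]
      exact unitCube_isCompact.inter_right
        ((hFc.image (sim_continuous (le_trans zero_le_one hs) hψs)).isClosed)
    refine ⟨hMc, hMne, fun _ => M, fun _ => ⟨hMne, ψ, ⟨s, hs, hψs⟩, hMeq⟩, ?_⟩
    simp [hausdorffDist_self_zero]
  constructor
  · -- part (i)
    intro A M hA hM
    obtain ⟨hAc, hAne, v, hv, htend⟩ := hA
    obtain ⟨hMne, ψ, ⟨s, hs, hψs⟩, hMeq⟩ := hM
    by_cases hAF : A = F
    · exact ⟨M, hminiMicro M ⟨hMne, ψ, ⟨s, hs, hψs⟩, by rw [hMeq, hAF]⟩, subset_rfl⟩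
    · subst hMeq
      obtain ⟨N₀, ψ', η, hηt, hη0, hmini, happrox, -⟩ :=
        core_construction hΦ' hFc hFne hT hTnl hFT hAc hAne hv htend hAF hs hψs hMne
      set Nn : ℕ → Set (Euc d) := fun k => unitCube d ∩ ψ' (k + N₀) '' F with hNndef
      have hNmini : ∀ k, IsMiniset F (Nn k) := fun k => hmini (k + N₀) (by omega)
      have hNc : ∀ k, IsCompact (Nn k) := by
        intro k
        obtain ⟨hne, ψ₂, ⟨s₂, hs₂, hψ₂⟩, heq⟩ := hNmini k
        show IsCompact (unitCube d ∩ ψ' (k + N₀) '' F)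
        rw [show unitCube d ∩ ψ' (k + N₀) '' F = unitCube d ∩ ψ₂ '' F from heq]
        exact unitCube_isCompact.inter_right
          ((hFc.image (sim_continuous (le_trans zero_le_one hs₂) hψ₂)).isClosed)
      have hNne : ∀ k, (Nn k).Nonempty := fun k => (hNmini k).1
      have hNsub : ∀ k, Nn k ⊆ unitCube d := fun k => Set.inter_subset_left
      obtain ⟨L, φ, hLc, hLne, hφ, htendL⟩ := blaschke hNc hNne hNsub
      refine ⟨L, ⟨hLc, hLne, fun k => Nn (φ k), fun k => hNmini (φ k), htendL⟩, ?_⟩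
      intro m' hm'
      have hkey : ∀ k, infDist m' L ≤ η (φ k + N₀) + hausdorffDist (Nn (φ k)) L := by
        intro k
        obtain ⟨p, hp, hdp⟩ := happrox (φ k + N₀) (by omega) m' hm'
        have hfin : EMetric.hausdorffEdist (Nn (φ k)) L ≠ ⊤ :=
          hausdorffEdist_ne_top_of_nonempty_of_bounded (hNne _) hLne
            (hNc _).isBounded hLc.isBounded
        calc infDist m' L ≤ infDist p L + dist m' p := infDist_le_infDist_add_dist
          _ ≤ hausdorffDist (Nn (φ k)) L + dist m' p :=
              add_le_add_left (infDist_le_hausdorffDist_of_mem hp hfin) _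
          _ ≤ η (φ k + N₀) + hausdorffDist (Nn (φ k)) L := by
              rw [dist_comm]
              linarith [hdp]
      have hrhs : Tendsto (fun k => η (φ k + N₀) + hausdorffDist (Nn (φ k)) L) atTop
          (nhds (0 + 0)) := by
        apply Tendsto.add _ htendL
        apply hηt.comp
        apply tendsto_atTop_mono (fun k => le_trans hφ.le_apply (Nat.le_add_right _ _))
          tendsto_id
      rw [add_zero] at hrhs
      have h0 : infDist m' L ≤ 0 :=
        le_of_tendsto_of_tendsto' tendsto_const_nhds hrhs hkey
      exact (IsClosed.mem_iff_infDist_zero hLc.isClosed hLne).2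
        (le_antisymm h0 infDist_nonneg)
  · -- part (ii)
    intro A ψ U hA hψe hMne hU hQU
    obtain ⟨hAc, hAne, v, hv, htend⟩ := hA
    obtain ⟨s, hs, hψs⟩ := hψe
    by_cases hAF : A = F
    · exact hminiMicro _ ⟨hMne, ψ, ⟨s, hs, hψs⟩, by rw [hAF]⟩
    · obtain ⟨N₀, ψ', η, hηt, hη0, hmini, happrox, hosc⟩ :=
        core_construction hΦ' hFc hFne hT hTnl hFT hAc hAne hv htend hAF hs hψs hMne
      obtain ⟨N₁, hN₁N₀, hoscb⟩ := hosc U hU hQU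
      have hψc : Continuous ψ := sim_continuous (le_trans zero_le_one hs) hψs
      have hSAc : IsCompact (ψ '' A) := hAc.image hψc
      have hMc : IsCompact (unitCube d ∩ ψ '' A) :=
        unitCube_isCompact.inter_right hSAc.isClosed
      refine ⟨hMc, hMne, fun k => unitCube d ∩ ψ' (k + N₁) '' F,
        fun k => hmini (k + N₁) (by omega), ?_⟩
      rw [Metric.tendsto_atTop]
      intro ε hε
      obtain ⟨τ, hτ, habs⟩ := absorb hSAc hMne (ε/3) (by linarith)
      have hη_ev : ∀ᶠ k in atTop, η (k + N₁) < min τ (ε/3) := by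
        have h1 : Tendsto (fun k => η (k + N₁)) atTop (nhds 0) :=
          hηt.comp (tendsto_atTop_mono (fun k => Nat.le_add_right _ _) tendsto_id)
        exact h1.eventually (gt_mem_nhds (lt_min hτ (by linarith)))
      obtain ⟨K, hK⟩ := eventually_atTop.mp hη_ev
      refine ⟨K, ?_⟩
      intro k hk
      set n := k + N₁ with hn
      have hnN₀ : N₀ ≤ n := by omega
      have hηn : η n < min τ (ε/3) := hK k hk
      have hbound : hausdorffDist (unitCube d ∩ ψ' n '' F) (unitCube d ∩ ψ '' A) ≤ 2*ε/3 := by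
        apply hausdorffDist_le_of_mem_dist (by linarith)
        · intro x hx
          have h1 : infDist x (ψ '' A) ≤ η n := hoscb n (by omega) x hx
          have h2 : infDist x (unitCube d ∩ ψ '' A) ≤ ε/3 :=
            habs x hx.1 (le_trans h1 (le_of_lt (lt_of_lt_of_le hηn (min_le_left _ _))))
          have h3 : infDist x (unitCube d ∩ ψ '' A) < 2*ε/3 := by linarith
          obtain ⟨y, hy, hxy⟩ := (infDist_lt_iff hMne).mp h3
          exact ⟨y, hy, hxy.le⟩
        · intro y hy
          obtain ⟨p, hp, hdp⟩ := happrox n hnN₀ y hy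
          refine ⟨p, hp, ?_⟩
          rw [dist_comm]
          have := min_le_right τ (ε/3)
          linarith
      rw [Real.dist_eq, sub_zero, abs_of_nonneg hausdorffDist_nonneg]
      calc hausdorffDist (unitCube d ∩ ψ' (k + N₁) '' F) (unitCube d ∩ ψ '' A) ≤ 2*ε/3 :=
            hbound
        _ < ε := by linarith
end
end
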